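/- arXiv:1006.1363 — 4 statements merged into one kernel-verified Lean document; each statement's English description precedes it below -/
import Mathlib

section
/- Let G be a finite group and let A be a subring of the center Z(ℂ[G]) for which there exists a partition 𝒦 of G such that {K̂ : K ∈ 𝒦} is a ℂ-linear basis of A and {1} ∈ 𝒦. Then A is automatically a Schur ring; that is, the partition 𝒦 also satisfies {g⁻¹ : g ∈ K} ∈ 𝒦 for every K ∈ 𝒦. -/
open scoped Classical

noncomputable section

/-- The set of irreducible complex characters of `G`. -/
def Irr (G : Type) [Group G] : Set (G → ℂ) :=
  {χ | ∃ V : FDRep ℂ G, CategoryTheory.Simple V ∧ FDRep.character V = χ}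

/-- `σ_X = ∑_{ψ ∈ X} ψ(1)·ψ`. -/
def sigmaChar {G : Type} [Group G] (X : Set (G → ℂ)) : G → ℂ :=
  fun g => ∑ᶠ ψ ∈ X, ψ 1 * ψ g

/-- `P` is a set partition of the set `S`. -/
def IsPartitionOf {α : Type*} (S : Set α) (P : Set (Set α)) : Prop :=
  ∅ ∉ P ∧ (∀ p ∈ P, p ⊆ S) ∧ ∀ a ∈ S, ∃! p, p ∈ P ∧ a ∈ p

/-- `(𝒳, 𝒦)` is a supercharacter theory of the finite group `G`. -/
def IsSCT (G : Type) [Group G] [Finite G]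
    (𝒳 : Set (Set (G → ℂ))) (𝒦 : Set (Set G)) : Prop :=
  IsPartitionOf (Irr G) 𝒳 ∧ IsPartitionOf Set.univ 𝒦 ∧ 𝒳.ncard = 𝒦.ncard ∧
    ({1} : Set G) ∈ 𝒦 ∧
    ∀ X ∈ 𝒳, ∀ K ∈ 𝒦, ∀ g ∈ K, ∀ h ∈ K, sigmaChar X g = sigmaChar X h

/-- `K̂ = ∑_{g ∈ K} g ∈ ℂ[G]`. -/
def ghat {G : Type} [Group G] (K : Set G) : MonoidAlgebra ℂ G :=
  ∑ᶠ g ∈ K, MonoidAlgebra.single g (1 : ℂ)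

/-- The central idempotent `e_χ = (χ(1)/|G|) ∑_g conj(χ g)·g` attached to a character. -/
def eIdem (G : Type) [Group G] (χ : G → ℂ) : MonoidAlgebra ℂ G :=
  (χ 1 / (Nat.card G : ℂ)) •
    ∑ᶠ g : G, (starRingEnd ℂ) (χ g) • MonoidAlgebra.single g (1 : ℂ)

/-- `f_X = ∑_{ψ ∈ X} e_ψ`. -/
def fIdem (G : Type) [Group G] (X : Set (G → ℂ)) : MonoidAlgebra ℂ G :=
  ∑ᶠ χ ∈ X, eIdem G χ

/-- Partition order: every part of `P` lies in some part of `Q`. -/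
def PartLE {α : Type*} (P Q : Set (Set α)) : Prop := ∀ p ∈ P, ∃ q ∈ Q, p ⊆ q

/-- The join of two partitions of the same set: parts are connected components of
the relation "lying in a common part of `P` or of `Q`". -/
def PartJoin {α : Type*} (P Q : Set (Set α)) : Set (Set α) :=
  {C | ∃ a ∈ ⋃₀ P, C = {b | Relation.ReflTransGen
      (fun x y => (∃ p ∈ P, x ∈ p ∧ y ∈ p) ∨ ∃ q ∈ Q, x ∈ q ∧ y ∈ q) a b}}

/-- Inner product of complex-valued functions on a finite group. -/
def cInner (H : Type) [Group H] (α β : H → ℂ) : ℂ :=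
  (Nat.card H : ℂ)⁻¹ * ∑ᶠ h : H, α h * (starRingEnd ℂ) (β h)

/-- Restriction of a function on `G` to a subgroup. -/
def resChar {G : Type} [Group G] (H : Subgroup G) (χ : G → ℂ) : ↥H → ℂ := fun h => χ ↑h

/-- Extension by zero of a function on a subgroup. -/
def zeroExtend {G : Type} [Group G] (H : Subgroup G) (φ : ↥H → ℂ) : G → ℂ :=
  fun g => if h : g ∈ H then φ ⟨g, h⟩ else 0

/-- The induced class function `φ^G`. -/
def indChar {G : Type} [Group G] (H : Subgroup G) (φ : ↥H → ℂ) : G → ℂ :=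
  fun g => (Nat.card ↥H : ℂ)⁻¹ * ∑ᶠ x : G, zeroExtend H φ (x⁻¹ * g * x)

/-- The superclass of `x` with respect to a partition `𝒦` of `G`. -/
def sclass {G : Type} [Group G] (𝒦 : Set (Set G)) (x : G) : Set G := ⋃₀ {K ∈ 𝒦 | x ∈ K}

/-- Superinduction: `φ^{(G)}(x) = [G:H]·(1/|[x]|)·∑_{y ∈ [x]} φ⁰(y)`. -/
def superInd {G : Type} [Group G] (𝒦 : Set (Set G)) (H : Subgroup G) (φ : ↥H → ℂ) : G → ℂ :=
  fun x => (H.index : ℂ) * (((sclass 𝒦 x).ncard : ℂ))⁻¹ * ∑ᶠ y ∈ sclass 𝒦 x, zeroExtend H φ y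

/-- A subgroup is `𝒞`-normal when it is a union of superclasses. -/
def CNormal {G : Type} [Group G] (𝒦 : Set (Set G)) (N : Subgroup G) : Prop :=
  ∃ T ⊆ 𝒦, (N : Set G) = ⋃₀ T

/-- `Irr(G/N)` viewed inside `Irr(G)`: irreducible characters with `N` in their kernel. -/
def IrrOver {G : Type} [Group G] (N : Subgroup G) : Set (G → ℂ) :=
  {χ ∈ Irr G | ∀ n ∈ N, χ n = χ 1}

/-- The set of irreducible constituents of the restriction of `θ` to `N`. -/
def constituentsOn {G : Type} [Group G] (N : Subgroup G) (θ : G → ℂ) : Set (↥N → ℂ) :=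
  {ψ ∈ Irr ↥N | cInner ↥N (resChar N θ) ψ ≠ 0}

/-- `Irr(G|ψ)`: irreducible characters of `G` lying over `ψ ∈ Irr(N)`. -/
def irrOverChar {G : Type} [Group G] (N : Subgroup G) (ψ : ↥N → ℂ) : Set (G → ℂ) :=
  {χ ∈ Irr G | cInner ↥N (resChar N χ) ψ ≠ 0}

/-- `X^G = ⋃_{ψ ∈ X} Irr(G|ψ)` for `X ⊆ Irr(N)`. -/
def indSet {G : Type} [Group G] (N : Subgroup G) (X : Set (↥N → ℂ)) : Set (G → ℂ) :=
  ⋃ ψ ∈ X, irrOverChar N ψ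

/-- Conjugation of a normal subgroup by a group element. -/
def conjSub {G : Type} [Group G] {N : Subgroup G} (hN : N.Normal) (g : G) (n : ↥N) : ↥N :=
  ⟨g * ↑n * g⁻¹, hN.conj_mem ↑n n.2 g⟩

/-- The conjugation action of `g ∈ G` on class functions of a normal subgroup `N`. -/
def charConj {G : Type} [Group G] {N : Subgroup G} (hN : N.Normal) (g : G)
    (ψ : ↥N → ℂ) : ↥N → ℂ :=
  fun n => ψ (conjSub hN g⁻¹ n)

/-- Inflation of a set of characters of `G/N` to characters of `G`. -/
def inflateSet {G : Type} [Group G] (N : Subgroup G) [N.Normal]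
    (Y : Set (G ⧸ N → ℂ)) : Set (G → ℂ) :=
  (fun η => η ∘ (QuotientGroup.mk : G → G ⧸ N)) '' Y

/-- Deflation of a set of characters of `G` (with `N` in their kernels) to characters
of `G/N`. -/
def deflate {G : Type} [Group G] (N : Subgroup G) [N.Normal]
    (X : Set (G → ℂ)) : Set (G ⧸ N → ℂ) :=
  (fun χ => fun q : G ⧸ N => χ (Quotient.out q)) '' X

/-- The natural map `M → MN/N ≤ G/N`. -/
def projMN {G : Type} [Group G] (M N : Subgroup G) [N.Normal] (m : ↥M) :
    ↥(M.map (QuotientGroup.mk' N)) :=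
  ⟨QuotientGroup.mk' N ↑m, Subgroup.mem_map_of_mem _ m.2⟩

end


noncomputable section StarAux
set_option linter.unusedSectionVars false
variable {G : Type} [Group G] [Fintype G]

def psi {G : Type} [Group G] (x : MonoidAlgebra ℂ G) : MonoidAlgebra ℂ G :=
  MonoidAlgebra.ofCoeff
    (Finsupp.equivMapDomain (Equiv.inv G) (Finsupp.mapRange (starRingEnd ℂ) (map_zero _) x.coeff))

lemma psi_apply {G : Type} [Group G] (x : MonoidAlgebra ℂ G) (g : G) :
    (psi x).coeff g = starRingEnd ℂ (x.coeff g⁻¹) := rfl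

instance : Module.Finite ℂ (MonoidAlgebra ℂ G) :=
  Module.Finite.equiv (MonoidAlgebra.coeffLinearEquiv ℂ).symm

lemma mul_apply_fin (f g : MonoidAlgebra ℂ G) (x : G) :
    (f * g).coeff x = ∑ a : G, f.coeff a * g.coeff (a⁻¹ * x) := by
  rw [MonoidAlgebra.coeff_mul_apply_left, Finsupp.sum_fintype]
  simp

lemma psi_involutive {G : Type} [Group G] (x : MonoidAlgebra ℂ G) : psi (psi x) = x := by
  ext g; simp [psi_apply]

lemma psi_add {G : Type} [Group G] (x y : MonoidAlgebra ℂ G) :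
    psi (x + y) = psi x + psi y := by
  ext g; exact map_add (starRingEnd ℂ) _ _

lemma psi_zero {G : Type} [Group G] : psi (0 : MonoidAlgebra ℂ G) = 0 := by
  ext g; simp [psi_apply]

lemma psi_smul {G : Type} [Group G] (c : ℂ) (x : MonoidAlgebra ℂ G) :
    psi (c • x) = (starRingEnd ℂ c) • psi x := by
  ext g; exact map_mul (starRingEnd ℂ) _ _

lemma psi_sub {G : Type} [Group G] (x y : MonoidAlgebra ℂ G) :
    psi (x - y) = psi x - psi y := by
  ext g; exact map_sub (starRingEnd ℂ) _ _

lemma psi_mul (x y : MonoidAlgebra ℂ G) : psi (x * y) = psi y * psi x := by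
  ext g
  rw [psi_apply, mul_apply_fin, mul_apply_fin, map_sum]
  refine Fintype.sum_equiv (Equiv.mulLeft g⁻¹).symm _ _ (fun a => ?_)
  simp only [Equiv.mulLeft_symm, Equiv.coe_mulLeft, psi_apply, map_mul]
  rw [mul_comm]
  congr 2 <;> group

lemma psi_one {G : Type} [Group G] : psi (1 : MonoidAlgebra ℂ G) = 1 := by
  ext g
  rw [psi_apply]
  rw [MonoidAlgebra.one_def]
  rw [MonoidAlgebra.coeff_single]
  simp only [Finsupp.single_apply]
  by_cases hg : g = 1
  · subst hg; simp
  · rw [if_neg (fun h => hg (by rw [← inv_eq_one, ← h])), if_neg (fun h => hg h.symm), map_zero]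

lemma tau_psi (x : MonoidAlgebra ℂ G) :
    (x * psi x).coeff 1 = ∑ a : G, x.coeff a * starRingEnd ℂ (x.coeff a) := by
  rw [mul_apply_fin]
  refine Finset.sum_congr rfl fun a _ => ?_
  rw [psi_apply]
  congr 2
  group

lemma pos_eq_zero (x : MonoidAlgebra ℂ G) (h : (x * psi x).coeff 1 = 0) : x = 0 := by
  rw [tau_psi] at h
  have h2 : ∑ a : G, Complex.normSq (x.coeff a) = 0 := by
    have : ((∑ a : G, Complex.normSq (x.coeff a) : ℝ) : ℂ) = 0 := by
      push_cast
      rw [← h]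
      exact Finset.sum_congr rfl fun a _ => (Complex.mul_conj (x.coeff a)).symm
    exact_mod_cast this
  have h3 := (Finset.sum_eq_zero_iff_of_nonneg
    (fun a _ => Complex.normSq_nonneg (x.coeff a))).mp h2
  ext g
  exact Complex.normSq_eq_zero.mp (h3 g (Finset.mem_univ g))

lemma central_sq {x : MonoidAlgebra ℂ G} (hx : ∀ y, x * y = y * x) (h : x * x = 0) :
    x = 0 := by
  have hpsisq : psi x * psi x = 0 := by rw [← psi_mul, h, psi_zero]
  have hc : (x * psi x) * (x * psi x) = 0 := by
    calc (x * psi x) * (x * psi x) = x * (psi x * x) * psi x := by noncomm_ring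
    _ = x * (x * psi x) * psi x := by rw [← hx (psi x)]
    _ = (x * x) * (psi x * psi x) := by noncomm_ring
    _ = 0 := by rw [h, zero_mul]
  have hxx : x * psi x = 0 := by
    apply pos_eq_zero
    have : psi (x * psi x) = x * psi x := by rw [psi_mul, psi_involutive]
    rw [this, hc]
    rfl
  apply pos_eq_zero
  rw [hxx]
  rfl

lemma psi_central {e : MonoidAlgebra ℂ G} (he : ∀ y, e * y = y * e) :
    ∀ y, psi e * y = y * psi e := by
  intro y
  have h1 : y * psi e = psi (e * psi y) := by
    rw [psi_mul, psi_involutive]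
  have h2 : psi e * y = psi (psi y * e) := by
    rw [psi_mul, psi_involutive]
  rw [h1, h2, he]

lemma central_idem_psi {e : MonoidAlgebra ℂ G} (he : ∀ y, e * y = y * e)
    (hi : e * e = e) : psi e = e := by
  have hpp : psi e * psi e = psi e := by rw [← psi_mul, hi]
  have hef : e * (e * psi e) = e * psi e := by rw [← mul_assoc, hi]
  have hfe : (e * psi e) * psi e = e * psi e := by rw [mul_assoc, hpp]
  have hff : (e * psi e) * (e * psi e) = e * psi e := by
    calc (e * psi e) * (e * psi e) = e * (psi e * e) * psi e := by noncomm_ring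
    _ = e * (e * psi e) * psi e := by rw [← he (psi e)]
    _ = (e * e) * (psi e * psi e) := by noncomm_ring
    _ = e * psi e := by rw [hi, hpp]
  have hg : (e - e * psi e) * psi (e - e * psi e) = 0 := by
    have hpf : psi (e * psi e) = e * psi e := by rw [psi_mul, psi_involutive]
    rw [psi_sub, hpf]
    have hpe' : psi e = psi e := rfl
    calc (e - e * psi e) * (psi e - e * psi e)
        = e * psi e - e * (e * psi e) - (e * psi e) * psi e + (e * psi e) * (e * psi e) := by
          noncomm_ring
    _ = 0 := by rw [hef, hfe, hff]; noncomm_ring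
  have hgz : e - e * psi e = 0 := by
    apply pos_eq_zero
    rw [hg]
    rfl
  have hef2 : e = e * psi e := by
    have := sub_eq_zero.mp hgz
    exact this
  calc psi e = psi (e * psi e) := by rw [← hef2]
  _ = e * psi e := by rw [psi_mul, psi_involutive]
  _ = e := hef2.symm

lemma psi_finset_sum {ι : Type*} (s : Finset ι) (f : ι → MonoidAlgebra ℂ G) :
    psi (∑ i ∈ s, f i) = ∑ i ∈ s, psi (f i) := by
  classical
  induction s using Finset.cons_induction with
  | empty => simp [psi_zero]
  | cons i s hi ih => rw [Finset.sum_cons, Finset.sum_cons, psi_add, ih]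

open Polynomial in
lemma psi_aeval_central {a : MonoidAlgebra ℂ G} (ha : ∀ y, a * y = y * a) :
    ∃ q : Polynomial ℂ, psi a = Polynomial.aeval a q := by
  classical
  have hint : IsIntegral ℂ a := IsIntegral.of_finite ℂ a
  set p := minpoly ℂ a with hp
  have hp0 : p ≠ 0 := minpoly.ne_zero hint
  have hmonic := minpoly.monic hint
  -- aeval of any polynomial at a is central
  have hamem : a ∈ Subalgebra.center ℂ (MonoidAlgebra ℂ G) :=
    Subalgebra.mem_center_iff.mpr fun b => (ha b).symm
  have hcen : ∀ q : Polynomial ℂ, ∀ y, (aeval a q) * y = y * (aeval a q) := by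
    intro q y
    have h1 : aeval a q ∈ Algebra.adjoin ℂ ({a} : Set (MonoidAlgebra ℂ G)) :=
      Polynomial.aeval_mem_adjoin_singleton ℂ a
    have h2 : Algebra.adjoin ℂ ({a} : Set (MonoidAlgebra ℂ G)) ≤
        Subalgebra.center ℂ (MonoidAlgebra ℂ G) :=
      Algebra.adjoin_le (Set.singleton_subset_iff.mpr hamem)
    exact (Subalgebra.mem_center_iff.mp (h2 h1) y).symm
  -- p is squarefree
  have hsf : Squarefree p := by
    by_contra hns
    rw [Squarefree] at hns
    push_neg at hns
    obtain ⟨b, hb2, hbu⟩ := hns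
    obtain ⟨s, hs⟩ := hb2
    have hbne : b ≠ 0 := by rintro rfl; rw [mul_zero, zero_mul] at hs; exact hp0 hs
    have hsne : s ≠ 0 := by rintro rfl; rw [mul_zero] at hs; exact hp0 hs
    have hz : aeval a (b * s) * aeval a (b * s) = 0 := by
      rw [← map_mul]
      have hbs2 : b * s * (b * s) = p * s := by rw [hs]; ring
      rw [hbs2, map_mul]
      rw [hp, minpoly.aeval, zero_mul]
    have h0 : aeval a (b * s) = 0 := central_sq (hcen _) hz
    have hdvd : p ∣ b * s := minpoly.dvd ℂ a h0
    have hbs0 : b * s ≠ 0 := mul_ne_zero hbne hsne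
    have hle : p.natDegree ≤ b.natDegree + s.natDegree := by
      have := Polynomial.natDegree_le_of_dvd hdvd hbs0
      rwa [Polynomial.natDegree_mul hbne hsne] at this
    have hdb : 1 ≤ b.natDegree := by
      by_contra hd
      push_neg at hd
      interval_cases h : b.natDegree
      · obtain ⟨c, rfl⟩ := Polynomial.natDegree_eq_zero.mp h
        exact hbu (isUnit_C.mpr (isUnit_iff_ne_zero.mpr (fun hc => hbne (by rw [hc, map_zero]))))
    have heq : p.natDegree = b.natDegree + b.natDegree + s.natDegree := by
      rw [hs, Polynomial.natDegree_mul (mul_ne_zero hbne hbne) hsne,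
        Polynomial.natDegree_mul hbne hbne]
    omega
  -- roots
  have hsplits : p.Splits := IsAlgClosed.splits p
  have hsep : p.Separable := (PerfectField.separable_iff_squarefree).mpr hsf
  have hnodup : p.roots.Nodup := Polynomial.nodup_roots hsep
  set t : Finset ℂ := p.roots.toFinset with ht
  have htval : t.val = p.roots := by
    rw [ht, Multiset.toFinset_val, Multiset.dedup_eq_self.mpr hnodup]
  have hinj : Set.InjOn (id : ℂ → ℂ) t := fun x _ y _ h => h
  have hpprod : p = ∏ μ ∈ t, (X - C μ) := by
    have hthis := hsplits.eq_prod_roots_of_monic hmonic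
    rw [hthis, Finset.prod_eq_multiset_prod, htval]
  have htne : t.Nonempty := by
    rcases Finset.eq_empty_or_nonempty t with h | h
    · exfalso
      have hpos := minpoly.natDegree_pos hint
      rw [← hp, hpprod, h, Finset.prod_empty] at hpos
      simp at hpos
    · exact h
  have hP0 : aeval a (∏ μ ∈ t, (X - C μ)) = 0 := by
    rw [← hpprod, hp]; exact minpoly.aeval ℂ a
  have hdvd0 : ∀ q : Polynomial ℂ, (∏ μ ∈ t, (X - C μ)) ∣ q → aeval a q = 0 := by
    rintro q ⟨w, rfl⟩
    rw [map_mul, hP0, zero_mul]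
  set e : ℂ → MonoidAlgebra ℂ G := fun lam => aeval a (Lagrange.basis t id lam) with he
  -- basis factorization
  have hfac : ∀ lam : ℂ, (∏ μ ∈ t.erase lam, (X - C μ)) ∣ Lagrange.basis t id lam := by
    intro lam
    rw [Lagrange.basis]
    have : ∀ μ ∈ t.erase lam, Lagrange.basisDivisor (id lam) (id μ)
        = C ((lam - μ)⁻¹) * (X - C μ) := by
      intro μ _
      rw [Lagrange.basisDivisor]
      simp
    rw [Finset.prod_congr rfl this, Finset.prod_mul_distrib]
    exact Dvd.intro_left _ rfl
  have hXdvd : ∀ lam μ : ℂ, lam ∈ t.erase μ → (X - C lam) ∣ Lagrange.basis t id μ := by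
    intro lam μ hmem
    rw [Lagrange.basis]
    refine dvd_trans ?_ (Finset.dvd_prod_of_mem _ hmem)
    rw [Lagrange.basisDivisor]
    simp only [id]
    exact Dvd.intro_left _ rfl
  have horth : ∀ lam ∈ t, ∀ μ ∈ t, lam ≠ μ → e lam * e μ = 0 := by
    intro lam hlam μ hmu hne
    rw [he]
    simp only
    rw [← map_mul, mul_comm]
    apply hdvd0
    rw [← Finset.mul_prod_erase t _ hlam]
    exact mul_dvd_mul (hXdvd lam μ (Finset.mem_erase.mpr ⟨hne, hlam⟩)) (hfac lam)
  have hsum : ∑ lam ∈ t, e lam = 1 := by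
    rw [he]
    simp only
    rw [← map_sum, Lagrange.sum_basis hinj htne, map_one]
  have hidem : ∀ lam ∈ t, e lam * e lam = e lam := by
    intro lam hlam
    have : e lam * (∑ μ ∈ t, e μ) = e lam := by rw [hsum, mul_one]
    rw [Finset.mul_sum] at this
    rw [Finset.sum_eq_single lam (fun μ hmu hne => horth lam hlam μ hmu (Ne.symm hne))
      (fun h => absurd hlam h)] at this
    exact this
  have haev : ∀ lam ∈ t, a * e lam = algebraMap ℂ _ lam * e lam := by
    intro lam hlam
    have h0 : aeval a ((X - C lam) * Lagrange.basis t id lam) = 0 := by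
      apply hdvd0
      rw [← Finset.mul_prod_erase t _ hlam]
      exact mul_dvd_mul_left _ (hfac lam)
    rw [map_mul, map_sub, aeval_X, aeval_C, sub_mul] at h0
    rw [sub_eq_zero] at h0
    exact h0
  have hadecomp : a = ∑ lam ∈ t, algebraMap ℂ _ lam * e lam := by
    calc a = a * 1 := (mul_one a).symm
    _ = a * ∑ lam ∈ t, e lam := by rw [hsum]
    _ = ∑ lam ∈ t, a * e lam := by rw [Finset.mul_sum]
    _ = ∑ lam ∈ t, algebraMap ℂ _ lam * e lam := Finset.sum_congr rfl haev
  have hpsie : ∀ lam ∈ t, psi (e lam) = e lam := fun lam hlam =>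
    central_idem_psi (hcen _) (hidem lam hlam)
  have hpsialg : ∀ c : ℂ, psi (algebraMap ℂ (MonoidAlgebra ℂ G) c)
      = algebraMap ℂ _ (starRingEnd ℂ c) := by
    intro c
    rw [Algebra.algebraMap_eq_smul_one, Algebra.algebraMap_eq_smul_one, psi_smul, psi_one]
  refine ⟨∑ lam ∈ t, C (starRingEnd ℂ lam) * Lagrange.basis t id lam, ?_⟩
  calc psi a = psi (∑ lam ∈ t, algebraMap ℂ _ lam * e lam) := by rw [← hadecomp]
  _ = ∑ lam ∈ t, psi (algebraMap ℂ _ lam * e lam) := psi_finset_sum _ _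
  _ = ∑ lam ∈ t, algebraMap ℂ _ (starRingEnd ℂ lam) * e lam := by
      refine Finset.sum_congr rfl fun lam hlam => ?_
      rw [psi_mul, hpsie lam hlam, hpsialg]
      exact (Algebra.commutes _ _).symm
  _ = aeval a (∑ lam ∈ t, C (starRingEnd ℂ lam) * Lagrange.basis t id lam) := by
      rw [map_sum]
      exact Finset.sum_congr rfl fun lam hlam => by rw [map_mul, aeval_C]

lemma ghat_apply (S : Set G) (g : G) : (ghat S).coeff g = if g ∈ S then 1 else 0 := by
  classical
  rw [ghat, ← Set.coe_toFinset S, finsum_mem_coe_finset, MonoidAlgebra.coeff_sum, Finset.sum_apply']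
  simp [Finsupp.single_apply, MonoidAlgebra.coeff_single, Set.mem_toFinset]

lemma psi_ghat (K : Set G) : psi (ghat K) = ghat ((fun g => g⁻¹) '' K) := by
  ext g
  rw [psi_apply, ghat_apply, ghat_apply]
  have hiff : g⁻¹ ∈ K ↔ g ∈ (fun x => x⁻¹) '' K :=
    ⟨fun h => ⟨g⁻¹, h, inv_inv g⟩, fun ⟨x, hx, hxg⟩ => by rw [← hxg, inv_inv]; exact hx⟩
  by_cases h : g⁻¹ ∈ K
  · rw [if_pos h, if_pos (hiff.mp h), map_one]
  · rw [if_neg h, if_neg (fun hh => h (hiff.mpr hh)), map_zero]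

end StarAux

/-- A subring of `Z(ℂ[G])` having a basis `{K̂ : K ∈ 𝒦}` for a
partition `𝒦` of `G` with `{1} ∈ 𝒦` is automatically a Schur ring: `𝒦` is closed under
pointwise inversion of parts. -/
theorem stmt2 (G : Type) [Group G] [Finite G]
    (A : Subring (MonoidAlgebra ℂ G))
    (hA : (A : Set (MonoidAlgebra ℂ G)) ⊆ ↑(Subalgebra.center ℂ (MonoidAlgebra ℂ G)))
    (𝒦 : Set (Set G)) (hpart : IsPartitionOf Set.univ 𝒦)
    (hli : LinearIndependent ℂ (fun K : 𝒦 => ghat (K : Set G)))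
    (hspan : (A : Set (MonoidAlgebra ℂ G)) =
      ↑(Submodule.span ℂ ((fun K => ghat K) '' 𝒦)))
    (h1 : ({1} : Set G) ∈ 𝒦) :
    ∀ K ∈ 𝒦, (fun g => g⁻¹) '' K ∈ 𝒦 := by
  cases nonempty_fintype G
  -- uniqueness of parts
  have huniq : ∀ {p q : Set G}, p ∈ 𝒦 → q ∈ 𝒦 → ∀ {x : G}, x ∈ p → x ∈ q → p = q := by
    intro p q hp hq x hxp hxq
    obtain ⟨r, -, hr⟩ := hpart.2.2 x (Set.mem_univ x)
    rw [hr p ⟨hp, hxp⟩, hr q ⟨hq, hxq⟩]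
  have hAM : ∀ x : MonoidAlgebra ℂ G,
      x ∈ A ↔ x ∈ Submodule.span ℂ ((fun K => ghat K) '' 𝒦) := by
    intro x
    rw [← SetLike.mem_coe, hspan, SetLike.mem_coe]
  -- key: the inverse image of each part is a union of parts
  have key : ∀ K ∈ 𝒦, ∀ L ∈ 𝒦, (∃ g ∈ L, g ∈ (fun g => g⁻¹) '' K) →
      L ⊆ (fun g => g⁻¹) '' K := by
    intro K hK L hL
    set a := ghat K with ha
    have haA : a ∈ A := (hAM a).mpr (Submodule.subset_span ⟨K, hK, rfl⟩)
    have hcentral : ∀ y, a * y = y * a := fun y =>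
      (Subalgebra.mem_center_iff.mp (hA haA) y).symm
    obtain ⟨q, hq⟩ := psi_aeval_central hcentral
    have hpsiA : psi a ∈ A := by
      rw [hq, Polynomial.aeval_eq_sum_range]
      refine Subring.sum_mem A fun i _ => ?_
      rw [hAM]
      exact Submodule.smul_mem _ _ ((hAM (a ^ i)).mp (Subring.pow_mem A haA i))
    have hinvspan : ghat ((fun g => g⁻¹) '' K) ∈
        Submodule.span ℂ ((fun K => ghat K) '' 𝒦) := by
      rw [← psi_ghat]
      exact (hAM _).mp hpsiA
    obtain ⟨c, hcsupp, hcsum⟩ := Submodule.mem_span_set.mp hinvspan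
    -- the coefficients of ghat (inv '' K) are constant on parts
    have hconst : ∀ g ∈ L, ∀ h ∈ L,
        (ghat ((fun g => g⁻¹) '' K)).coeff g = (ghat ((fun g => g⁻¹) '' K)).coeff h := by
      intro g hg h hh
      rw [← hcsum, Finsupp.sum, MonoidAlgebra.coeff_sum, Finset.sum_apply', Finset.sum_apply']
      refine Finset.sum_congr rfl fun v hv => ?_
      obtain ⟨Lv, hLv, rfl⟩ := hcsupp hv
      rw [MonoidAlgebra.coeff_smul_apply, MonoidAlgebra.coeff_smul_apply, ghat_apply, ghat_apply]
      congr 1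
      by_cases hgv : g ∈ Lv
      · rw [if_pos hgv, if_pos (huniq hLv hL hgv hg ▸ hh)]
      · rw [if_neg hgv, if_neg (fun hhv => hgv (huniq hLv hL hhv hh ▸ hg))]
    rintro ⟨g, hgL, hgK⟩ h hhL
    have hch := hconst g hgL h hhL
    rw [ghat_apply, ghat_apply, if_pos hgK] at hch
    by_contra hh
    rw [if_neg hh] at hch
    exact (one_ne_zero : (1 : ℂ) ≠ 0) hch
  -- assemble
  intro K hK
  have hKne : K.Nonempty :=
    Set.nonempty_iff_ne_empty.mpr (fun h => hpart.1 (h ▸ hK))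
  obtain ⟨k, hk⟩ := hKne
  obtain ⟨L, ⟨hL, hkL⟩, -⟩ := hpart.2.2 k⁻¹ (Set.mem_univ _)
  have hinvinv : ∀ S : Set G, (fun g : G => g⁻¹) '' ((fun g : G => g⁻¹) '' S) = S := by
    intro S
    rw [Set.image_image]
    simp
  have h1 : L ⊆ (fun g => g⁻¹) '' K :=
    key K hK L hL ⟨k⁻¹, hkL, ⟨k, hk, rfl⟩⟩
  have h2 : K ⊆ (fun g => g⁻¹) '' L :=
    key L hL K hK ⟨k, hk, ⟨k⁻¹, hkL, inv_inv k⟩⟩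
  have h3 : (fun g : G => g⁻¹) '' K ⊆ L := by
    have := Set.image_mono (f := fun g : G => g⁻¹) h2
    rwa [hinvinv] at this
  rw [Set.Subset.antisymm h3 h1]
  exact hL
end

section
/- Let G be a finite group and let (𝒳,𝒦) and (𝒴,𝓛) be supercharacter theories of G. Then (𝒳∨𝒴, 𝒦∨𝓛) is also a supercharacter theory of G, where ∨ denotes the join in the lattices of partitions of Irr(G) and of G respectively. -/
open scoped Classical

/-! ### Auxiliary machinery for Statement 5 -/

noncomputable section AuxJoin
open Relation Set Module

variable {α : Type*} {M : Type*} [AddCommGroup M] [Module ℂ M]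

/-- Finsum over a finite set as a `Finset` sum. -/
lemma fms {s : Set α} (hs : s.Finite) {N : Type*} [AddCommMonoid N] (f : α → N) :
    ∑ᶠ a ∈ s, f a = ∑ a ∈ hs.toFinset, f a := by
  rw [← finsum_mem_coe_finset]
  exact finsum_mem_congr hs.coe_toFinset.symm (fun _ _ => rfl)

variable {S : Set α} {P Q R : Set (Set α)}

lemma IsPartitionOf.part_eq (hP : IsPartitionOf S P) {p q : Set α} (hp : p ∈ P) (hq : q ∈ P)
    {a : α} (hap : a ∈ p) (haq : a ∈ q) : p = q := by
  obtain ⟨r, -, hr⟩ := hP.2.2 a (hP.2.1 p hp hap)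
  rw [hr p ⟨hp, hap⟩, hr q ⟨hq, haq⟩]

lemma IsPartitionOf.part_nonempty (hP : IsPartitionOf S P) {p : Set α} (hp : p ∈ P) :
    p.Nonempty := by
  rcases p.eq_empty_or_nonempty with h | h
  · exact absurd (h ▸ hp) hP.1
  · exact h

lemma IsPartitionOf.sUnion_eq (hP : IsPartitionOf S P) : ⋃₀ P = S := by
  apply subset_antisymm (sUnion_subset hP.2.1)
  intro a ha
  obtain ⟨p, ⟨hp, hap⟩, -⟩ := hP.2.2 a ha
  exact ⟨p, hp, hap⟩

lemma IsPartitionOf.pairwiseDisjoint (hP : IsPartitionOf S P) : P.PairwiseDisjoint id := by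
  intro p hp q hq hne
  rw [Function.onFun, Set.disjoint_left]
  intro a hap haq
  exact hne (hP.part_eq hp hq hap haq)

lemma IsPartitionOf.finite (hP : IsPartitionOf S P) (hS : S.Finite) : P.Finite :=
  hS.finite_subsets.subset fun p hp => hP.2.1 p hp

lemma IsPartitionOf.part_finite (hP : IsPartitionOf S P) (hS : S.Finite) {p : Set α}
    (hp : p ∈ P) : p.Finite := hS.subset (hP.2.1 p hp)

/-- The part of the partition `P` containing `a`. -/
def thePart (P : Set (Set α)) (a : α) : Set α := ⋃₀ {p ∈ P | a ∈ p}

lemma IsPartitionOf.thePart_eq (hP : IsPartitionOf S P) {p : Set α} (hp : p ∈ P) {a : α}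
    (ha : a ∈ p) : thePart P a = p := by
  apply subset_antisymm
  · rintro x ⟨q, ⟨hq, haq⟩, hxq⟩
    rwa [hP.part_eq hq hp haq ha] at hxq
  · exact fun x hx => ⟨p, ⟨hp, ha⟩, hx⟩

/-- The one-step relation generating the join of two partitions. -/
def jrel (P Q : Set (Set α)) (x y : α) : Prop :=
  (∃ p ∈ P, x ∈ p ∧ y ∈ p) ∨ ∃ q ∈ Q, x ∈ q ∧ y ∈ q

lemma jrel_symm : Symmetric (jrel P Q) := by
  rintro x y (⟨p, hp, h1, h2⟩ | ⟨q, hq, h1, h2⟩)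
  · exact Or.inl ⟨p, hp, h2, h1⟩
  · exact Or.inr ⟨q, hq, h2, h1⟩

lemma jrt_symm : Symmetric (ReflTransGen (jrel P Q)) :=
  haveI : Std.Symm (jrel P Q) := ⟨jrel_symm⟩
  fun a b h => (ReflTransGen.stdSymm (r := jrel P Q)).symm a b h

lemma mem_partJoin_iff {C : Set α} :
    C ∈ PartJoin P Q ↔ ∃ a ∈ ⋃₀ P, C = {b | ReflTransGen (jrel P Q) a b} := Iff.rfl

lemma jrel_mem (hP : IsPartitionOf S P) (hQ : IsPartitionOf S Q) {x y : α}
    (h : jrel P Q x y) : x ∈ S ∧ y ∈ S := by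
  rcases h with ⟨p, hp, h1, h2⟩ | ⟨q, hq, h1, h2⟩
  · exact ⟨hP.2.1 p hp h1, hP.2.1 p hp h2⟩
  · exact ⟨hQ.2.1 q hq h1, hQ.2.1 q hq h2⟩

lemma rt_mem (hP : IsPartitionOf S P) (hQ : IsPartitionOf S Q) {a b : α} (ha : a ∈ S)
    (h : ReflTransGen (jrel P Q) a b) : b ∈ S := by
  induction h with
  | refl => exact ha
  | tail _ h2 _ => exact (jrel_mem hP hQ h2).2

lemma comp_eq_of_rt {a b : α} (h : ReflTransGen (jrel P Q) a b) :
    {c | ReflTransGen (jrel P Q) a c} = {c | ReflTransGen (jrel P Q) b c} := by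
  ext c
  exact ⟨fun hc => (jrt_symm h).trans hc, fun hc => h.trans hc⟩

lemma join_isPartitionOf (hP : IsPartitionOf S P) (hQ : IsPartitionOf S Q) :
    IsPartitionOf S (PartJoin P Q) := by
  refine ⟨?_, ?_, ?_⟩
  · rintro ⟨a, -, hC⟩
    have : a ∈ (∅ : Set α) := by rw [hC]; exact ReflTransGen.refl
    exact this
  · rintro C ⟨a, ha, rfl⟩ b hb
    exact rt_mem hP hQ (hP.sUnion_eq ▸ ha) hb
  · intro a ha
    refine ⟨{b | ReflTransGen (jrel P Q) a b}, ⟨⟨a, ?_, rfl⟩, ReflTransGen.refl⟩, ?_⟩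
    · rw [hP.sUnion_eq]; exact ha
    · rintro C ⟨⟨a', _, rfl⟩, haC⟩
      exact comp_eq_of_rt haC

lemma subset_join_of_mem {C : Set α} (hC : C ∈ PartJoin P Q) {p : Set α}
    (hp : p ∈ P ∨ p ∈ Q) {x : α} (hxp : x ∈ p) (hxC : x ∈ C) : p ⊆ C := by
  obtain ⟨a, -, rfl⟩ := hC
  intro y hyp
  have hstep : jrel P Q x y := by
    rcases hp with h | h
    · exact Or.inl ⟨p, h, hxp, hyp⟩
    · exact Or.inr ⟨p, h, hxp, hyp⟩
  exact ReflTransGen.tail hxC hstep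

lemma rt_of_mem_join {C : Set α} (hC : C ∈ PartJoin P Q) {x y : α} (hx : x ∈ C) (hy : y ∈ C) :
    ReflTransGen (jrel P Q) x y := by
  obtain ⟨a, -, rfl⟩ := hC
  exact (jrt_symm hx).trans hy

lemma join_singleton (hP : IsPartitionOf S P) (hQ : IsPartitionOf S Q) {e : α}
    (heP : {e} ∈ P) (heQ : {e} ∈ Q) : ({e} : Set α) ∈ PartJoin P Q := by
  have hcomp : {b | ReflTransGen (jrel P Q) e b} = {e} := by
    apply subset_antisymm
    · intro b hb
      induction hb with
      | refl => rfl
      | tail _ hstep ih =>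
        have hce := Set.mem_singleton_iff.mp ih
        subst hce
        rcases hstep with ⟨p, hp, h3, h4⟩ | ⟨q, hq, h3, h4⟩
        · rw [hP.part_eq hp heP h3 rfl] at h4; exact h4
        · rw [hQ.part_eq hq heQ h3 rfl] at h4; exact h4
    · intro b hb
      rw [Set.mem_singleton_iff] at hb
      subst hb
      exact ReflTransGen.refl
  exact ⟨e, ⟨{e}, heP, rfl⟩, hcomp.symm⟩

lemma const_of_rt {f : α → ℂ}
    (h1 : ∀ p ∈ P, ∀ x ∈ p, ∀ y ∈ p, f x = f y)
    (h2 : ∀ q ∈ Q, ∀ x ∈ q, ∀ y ∈ q, f x = f y)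
    {x y : α} (h : ReflTransGen (jrel P Q) x y) : f x = f y := by
  induction h with
  | refl => rfl
  | tail _ hstep ih =>
    rcases hstep with ⟨p, hp, h3, h4⟩ | ⟨q, hq, h3, h4⟩
    · exact ih.trans (h1 p hp _ h3 _ h4)
    · exact ih.trans (h2 q hq _ h3 _ h4)

/-- Sum of the vectors `ι a` over `a ∈ p`. -/
def tot (ι : α → M) (p : Set α) : M := ∑ᶠ a ∈ p, ι a

lemma regroup (hP : IsPartitionOf S P) (hS : S.Finite) (ι : α → M) (c : Set α → ℂ)
    (ct : α → ℂ) (hct : ∀ p ∈ P, ∀ a ∈ p, ct a = c p) :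
    ∑ᶠ p ∈ P, c p • tot ι p = ∑ᶠ a ∈ S, ct a • ι a := by
  have h1 : ∀ p ∈ P, c p • tot ι p = ∑ᶠ a ∈ p, ct a • ι a := by
    intro p hp
    have hpf := hP.part_finite hS hp
    rw [tot, fms hpf, fms hpf, Finset.smul_sum]
    apply Finset.sum_congr rfl
    intro a ha
    rw [hct p hp a (hpf.mem_toFinset.mp ha)]
  rw [finsum_mem_congr rfl h1, ← finsum_mem_sUnion hP.pairwiseDisjoint (hP.finite hS)
    (fun p hp => hP.part_finite hS hp), hP.sUnion_eq]

lemma IsPartitionOf.subpartition (hP : IsPartitionOf S P) {T : Set (Set α)} (hT : T ⊆ P) :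
    IsPartitionOf (⋃₀ T) T := by
  refine ⟨fun h => hP.1 (hT h), fun p hp => subset_sUnion_of_mem hp, ?_⟩
  rintro a ⟨p, hp, hap⟩
  exact ⟨p, ⟨hp, hap⟩, fun q ⟨hq, haq⟩ => hP.part_eq (hT hq) (hT hp) haq hap⟩

lemma tot_sUnion (hP : IsPartitionOf S P) (hS : S.Finite) (ι : α → M) {T : Set (Set α)}
    (hT : T ⊆ P) : tot ι (⋃₀ T) = ∑ᶠ p ∈ T, tot ι p := by
  have hT' := hP.subpartition hT
  have hUf : (⋃₀ T).Finite := hS.subset (sUnion_subset fun p hp => hP.2.1 p (hT hp))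
  have h := regroup hT' hUf ι (fun _ => 1) (fun _ => 1) (fun _ _ _ _ => rfl)
  simp only [one_smul] at h
  rw [tot, ← h]

lemma finsum_mem_span (ι : α → M) {P : Set (Set α)} (hPf : P.Finite) (c : Set α → ℂ) :
    ∑ᶠ p ∈ P, c p • tot ι p ∈ Submodule.span ℂ (tot ι '' P) := by
  rw [fms hPf]
  exact Submodule.sum_mem _ fun p hp =>
    Submodule.smul_mem _ _ (Submodule.subset_span ⟨p, hPf.mem_toFinset.mp hp, rfl⟩)

lemma exists_coeff (ι : α → M) {P : Set (Set α)} (hPf : P.Finite) {f : M}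
    (hf : f ∈ Submodule.span ℂ (tot ι '' P)) :
    ∃ c : Set α → ℂ, ∑ᶠ p ∈ P, c p • tot ι p = f := by
  rw [Submodule.mem_span_set'] at hf
  obtain ⟨n, co, g, hsum⟩ := hf
  have hg : ∀ i, ∃ p, p ∈ P ∧ tot ι p = (g i : M) := fun i => (g i).2
  choose pa hpa1 hpa2 using hg
  refine ⟨fun p => ∑ i : Fin n, if pa i = p then co i else 0, ?_⟩
  rw [fms hPf]
  calc ∑ p ∈ hPf.toFinset, (∑ i : Fin n, if pa i = p then co i else 0) • tot ι p
      = ∑ p ∈ hPf.toFinset, ∑ i : Fin n, (if pa i = p then co i • tot ι p else 0) := by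
        apply Finset.sum_congr rfl
        intro p _
        rw [Finset.sum_smul]
        apply Finset.sum_congr rfl
        intro i _
        rw [ite_smul, zero_smul]
    _ = ∑ i : Fin n, ∑ p ∈ hPf.toFinset, (if pa i = p then co i • tot ι p else 0) :=
        Finset.sum_comm
    _ = ∑ i : Fin n, co i • tot ι (pa i) := by
        apply Finset.sum_congr rfl
        intro i _
        rw [Finset.sum_ite_eq, if_pos (hPf.mem_toFinset.mpr (hpa1 i))]
    _ = ∑ i : Fin n, co i • (g i : M) := by
        apply Finset.sum_congr rfl
        intro i _
        rw [hpa2 i]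
    _ = f := hsum

lemma finrank_tot_span [Module.Finite ℂ M] {ι : α → M} (hP : IsPartitionOf S P)
    (hS : S.Finite)
    (hind : ∀ c : α → ℂ, (∑ᶠ a ∈ S, c a • ι a) = 0 → ∀ a ∈ S, c a = 0) :
    finrank ℂ (Submodule.span ℂ (tot ι '' P)) = P.ncard := by
  have hPf := hP.finite hS
  haveI : Fintype ↥P := hPf.fintype
  have hrange : Set.range (fun p : ↥P => tot ι ↑p) = tot ι '' P := by
    rw [show (fun p : ↥P => tot ι ↑p) = tot ι ∘ Subtype.val from rfl, Set.range_comp,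
      Subtype.range_coe]
  have hli : LinearIndependent ℂ (fun p : ↥P => tot ι ↑p) := by
    rw [Fintype.linearIndependent_iff]
    intro g hg p
    set c : Set α → ℂ := fun q => if h : q ∈ P then g ⟨q, h⟩ else 0 with hc
    have hcp : ∀ q : ↥P, c ↑q = g q := fun q => by simp [hc, q.2]
    have h2 : ∑ᶠ q ∈ P, c q • tot ι q = 0 := by
      rw [← finsum_set_coe_eq_finsum_mem, finsum_eq_sum_of_fintype]
      rw [← hg]
      apply Finset.sum_congr rfl
      intro q _
      rw [hcp q]
    rw [regroup hP hS ι c (fun a => c (thePart P a))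
      (fun p hp a ha => show c (thePart P a) = c p by rw [hP.thePart_eq hp ha])] at h2
    obtain ⟨a, ha⟩ := hP.part_nonempty p.2
    have h3 := hind _ h2 a (hP.2.1 _ p.2 ha)
    rw [hP.thePart_eq p.2 ha, hcp p] at h3
    exact h3
  rw [← hrange, finrank_span_eq_card hli, ← Nat.card_coe_set_eq, Nat.card_eq_fintype_card]

lemma span_le_of_coarser (ι : α → M) (hP : IsPartitionOf S P) (hR : IsPartitionOf S R)
    (hS : S.Finite)
    (h : ∀ r ∈ R, ∀ p ∈ P, ∀ a, a ∈ p → a ∈ r → p ⊆ r) :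
    Submodule.span ℂ (tot ι '' R) ≤ Submodule.span ℂ (tot ι '' P) := by
  rw [Submodule.span_le]
  rintro _ ⟨r, hr, rfl⟩
  have hrT : r = ⋃₀ {p ∈ P | p ⊆ r} := by
    apply subset_antisymm
    · intro a har
      obtain ⟨p, ⟨hp, hap⟩, -⟩ := hP.2.2 a (hR.2.1 r hr har)
      exact ⟨p, ⟨hp, h r hr p hp a hap har⟩, hap⟩
    · exact sUnion_subset fun p hp => hp.2
  have hTf : {p ∈ P | p ⊆ r}.Finite := (hP.finite hS).subset fun p hp => hp.1
  simp only [SetLike.mem_coe]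
  rw [hrT, tot_sUnion hP hS ι (fun p hp => hp.1), fms hTf]
  exact Submodule.sum_mem _ fun p hp => Submodule.subset_span
    ⟨p, (hTf.mem_toFinset.mp hp).1, rfl⟩

lemma span_inf_le_join (ι : α → M) (hP : IsPartitionOf S P) (hQ : IsPartitionOf S Q)
    (hS : S.Finite)
    (hind : ∀ c : α → ℂ, (∑ᶠ a ∈ S, c a • ι a) = 0 → ∀ a ∈ S, c a = 0) :
    Submodule.span ℂ (tot ι '' P) ⊓ Submodule.span ℂ (tot ι '' Q)
      ≤ Submodule.span ℂ (tot ι '' PartJoin P Q) := by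
  rintro f ⟨hf1, hf2⟩
  obtain ⟨c, hc⟩ := exists_coeff ι (hP.finite hS) hf1
  obtain ⟨d, hd⟩ := exists_coeff ι (hQ.finite hS) hf2
  set ct : α → ℂ := fun a => c (thePart P a) with hct
  set dt : α → ℂ := fun a => d (thePart Q a) with hdt
  have h1 : ∑ᶠ a ∈ S, ct a • ι a = f := by
    rw [← regroup hP hS ι c ct (fun p hp a ha =>
      show c (thePart P a) = c p by rw [hP.thePart_eq hp ha])]
    exact hc
  have h2 : ∑ᶠ a ∈ S, dt a • ι a = f := by
    rw [← regroup hQ hS ι d dt (fun q hq a ha =>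
      show d (thePart Q a) = d q by rw [hQ.thePart_eq hq ha])]
    exact hd
  have heq : ∀ a ∈ S, ct a = dt a := by
    intro a ha
    have h0 : ∑ᶠ a ∈ S, (ct a - dt a) • ι a = 0 := by
      rw [fms hS] at h1 h2 ⊢
      simp only [sub_smul]
      rw [Finset.sum_sub_distrib, h1, h2, sub_self]
    exact sub_eq_zero.mp (hind _ h0 a ha)
  have hstepP : ∀ p ∈ P, ∀ x ∈ p, ∀ y ∈ p, ct x = ct y := fun p hp x hx y hy =>
    show c (thePart P x) = c (thePart P y) by
      rw [hP.thePart_eq hp hx, hP.thePart_eq hp hy]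
  have hstepQ : ∀ q ∈ Q, ∀ x ∈ q, ∀ y ∈ q, ct x = ct y := fun q hq x hx y hy => by
    rw [heq x (hQ.2.1 q hq hx), heq y (hQ.2.1 q hq hy)]
    show d (thePart Q x) = d (thePart Q y)
    rw [hQ.thePart_eq hq hx, hQ.thePart_eq hq hy]
  have hJ := join_isPartitionOf hP hQ
  set e : Set α → ℂ := fun C => if h : C.Nonempty then ct h.some else 0 with he
  have hecompat : ∀ C ∈ PartJoin P Q, ∀ a ∈ C, ct a = e C := by
    intro C hC a haC
    have hne : C.Nonempty := ⟨a, haC⟩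
    have hes : e C = ct hne.some := by rw [he]; exact dif_pos hne
    rw [hes]
    exact const_of_rt hstepP hstepQ (jrt_symm (rt_of_mem_join hC hne.some_mem haC))
  have hfinal : ∑ᶠ C ∈ PartJoin P Q, e C • tot ι C = f := by
    rw [regroup hJ hS ι e ct hecompat]
    exact h1
  rw [← hfinal]
  exact finsum_mem_span ι (hJ.finite hS) e

/-- Functions constant on each part, as a submodule. -/
def constSub (P : Set (Set α)) : Submodule ℂ (α → ℂ) where
  carrier := {f | ∀ p ∈ P, ∀ x ∈ p, ∀ y ∈ p, f x = f y}
  add_mem' := fun hf hg p hp x hx y hy => by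
    simp only [Pi.add_apply, hf p hp x hx y hy, hg p hp x hx y hy]
  zero_mem' := fun p hp x hx y hy => rfl
  smul_mem' := fun cc f hf p hp x hx y hy => by
    simp only [Pi.smul_apply, hf p hp x hx y hy]

end AuxJoin
noncomputable section AuxIrr
open Module

variable {G : Type} [Group G] [Finite G]

/-- The weighted inclusion `ψ ↦ ψ(1)·ψ` of characters. -/
def iota1 (G : Type) [Group G] : (G → ℂ) → (G → ℂ) := fun ψ => ψ 1 • ψ

/-- Delta functions on the group. -/
def iota2 (G : Type) [Group G] : G → (G → ℂ) := fun g h => if h = g then 1 else 0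

lemma sigma_eq_tot {X : Set (G → ℂ)} (hX : X.Finite) : sigmaChar X = tot (iota1 G) X := by
  funext g
  show (∑ᶠ ψ ∈ X, ψ 1 * ψ g) = (∑ᶠ ψ ∈ X, iota1 G ψ) g
  rw [fms hX, fms hX, Finset.sum_apply]
  apply Finset.sum_congr rfl
  intro ψ _
  simp [iota1]

lemma irr_ortho [Fintype G] {χ ψ : G → ℂ} (hχ : χ ∈ Irr G) (hψ : ψ ∈ Irr G) :
    ∑ g : G, χ g * ψ g⁻¹ = if χ = ψ then (Fintype.card G : ℂ) else 0 := by
  obtain ⟨V, hV, rfl⟩ := hχ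
  obtain ⟨W, hW, hWc⟩ := hψ
  haveI := hV; haveI := hW
  haveI : Invertible (Fintype.card G : ℂ) :=
    invertibleOfNonzero (Nat.cast_ne_zero.mpr Fintype.card_ne_zero)
  letI : Fintype ↑(GrpCat.of G) := ‹Fintype G›
  by_cases h : FDRep.character V = ψ
  · rw [if_pos h, ← h]
    have h2 := FDRep.char_orthonormal (k := ℂ) (G := GrpCat.of G) V V
    rw [if_pos ⟨CategoryTheory.Iso.refl V⟩] at h2
    have h3 : (∑ g : ↑(GrpCat.of G), V.character g * V.character g⁻¹)
        = (Fintype.card ↑(GrpCat.of G) : ℂ) := by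
      rw [Nat.card_eq_fintype_card] at h2
      have hc : (Fintype.card G : ℂ) ≠ 0 := Nat.cast_ne_zero.mpr Fintype.card_ne_zero
      rw [inv_mul_eq_iff_eq_mul₀ hc] at h2
      rw [h2]
      norm_num
    exact h3
  · rw [if_neg h]
    subst hWc
    have h2 := FDRep.char_orthonormal (k := ℂ) (G := GrpCat.of G) V W
    rw [if_neg (fun hne : Nonempty (V ≅ W) => h (FDRep.char_iso hne.some))] at h2
    have h3 : (∑ g : ↑(GrpCat.of G), V.character g * W.character g⁻¹) = 0 := by
      rw [Nat.card_eq_fintype_card] at h2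
      have hc : (Fintype.card G : ℂ) ≠ 0 := Nat.cast_ne_zero.mpr Fintype.card_ne_zero
      rw [inv_mul_eq_iff_eq_mul₀ hc] at h2
      rw [h2]
      norm_num
    exact h3

lemma irr_one_ne {χ : G → ℂ} (hχ : χ ∈ Irr G) : χ 1 ≠ 0 := by
  haveI := Fintype.ofFinite G
  intro h0
  have horto := irr_ortho hχ hχ
  rw [if_pos rfl] at horto
  obtain ⟨V, hV, hc⟩ := hχ
  haveI := hV
  have hfr : Module.finrank ℂ V = 0 := by
    have h1 := FDRep.char_one V
    rw [hc, h0] at h1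
    exact_mod_cast h1.symm
  haveI : Subsingleton V := Module.finrank_zero_iff.mp hfr
  have hzero : ∀ g : G, χ g = 0 := by
    intro g
    rw [← hc]
    show LinearMap.trace ℂ _ (V.ρ g) = 0
    have : V.ρ g = 0 := LinearMap.ext fun x => Subsingleton.elim _ _
    rw [this, map_zero]
  simp only [hzero, zero_mul, Finset.sum_const_zero] at horto
  exact Fintype.card_ne_zero (by exact_mod_cast horto.symm)

lemma irr_indep_fin [Fintype G] (s : Finset (G → ℂ)) (hs : ↑s ⊆ Irr G) (co : (G → ℂ) → ℂ)
    (h : ∑ ψ ∈ s, co ψ • ψ = 0) : ∀ ψ ∈ s, co ψ = 0 := by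
  intro ψ hψ
  have h0 : ∀ g : G, ∑ φ ∈ s, co φ * φ g = 0 := by
    intro g
    have := congrFun h g
    rw [Finset.sum_apply] at this
    simpa using this
  have key : ∑ φ ∈ s, ∑ g : G, co φ * φ g * ψ g⁻¹ = 0 := by
    rw [Finset.sum_comm]
    calc ∑ g : G, ∑ φ ∈ s, co φ * φ g * ψ g⁻¹
        = ∑ g : G, (∑ φ ∈ s, co φ * φ g) * ψ g⁻¹ := by
          apply Finset.sum_congr rfl
          intro g _
          rw [Finset.sum_mul]
      _ = 0 := by simp [h0]
  have key2 : ∑ φ ∈ s, co φ * ∑ g : G, φ g * ψ g⁻¹ = 0 := by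
    rw [← key]
    apply Finset.sum_congr rfl
    intro φ _
    rw [Finset.mul_sum]
    apply Finset.sum_congr rfl
    intro g _
    ring
  have key3 : ∑ φ ∈ s, (if φ = ψ then co φ * (Fintype.card G : ℂ) else 0) = 0 := by
    refine Eq.trans ?_ key2
    apply Finset.sum_congr rfl
    intro φ hφ
    rw [irr_ortho (hs hφ) (hs hψ), mul_ite, mul_zero]
  rw [Finset.sum_ite_eq' s ψ (fun φ => co φ * (Fintype.card G : ℂ)), if_pos hψ] at key3
  have hcard : (Fintype.card G : ℂ) ≠ 0 := Nat.cast_ne_zero.mpr Fintype.card_ne_zero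
  exact (mul_eq_zero.mp key3).resolve_right hcard

lemma irr_finite : (Irr G).Finite := by
  haveI := Fintype.ofFinite G
  apply LinearIndependent.setFinite (R := ℂ)
  rw [linearIndependent_iff']
  intro t g h i hi
  set co : (G → ℂ) → ℂ := fun ψ => if h : ψ ∈ Irr G then g ⟨ψ, h⟩ else 0 with hco
  have hsum : ∑ ψ ∈ t.image Subtype.val, co ψ • ψ = 0 := by
    rw [Finset.sum_image (fun a _ b _ hab => Subtype.val_injective hab)]
    rw [← h]
    apply Finset.sum_congr rfl
    intro j _
    congr 1
    simp [hco, j.2]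
  have := irr_indep_fin (t.image Subtype.val) (by
    intro ψ hψ
    simp only [Finset.coe_image, Set.mem_image] at hψ
    obtain ⟨j, -, rfl⟩ := hψ
    exact j.2) co hsum ↑i (Finset.mem_image_of_mem _ hi)
  simpa [hco, i.2] using this

lemma indep1 : ∀ c : (G → ℂ) → ℂ,
    (∑ᶠ ψ ∈ Irr G, c ψ • iota1 G ψ) = 0 → ∀ ψ ∈ Irr G, c ψ = 0 := by
  haveI := Fintype.ofFinite G
  intro c hc ψ hψ
  rw [fms irr_finite] at hc
  have h2 : ∑ φ ∈ irr_finite.toFinset, (c φ * φ 1) • φ = 0 := by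
    rw [← hc]
    apply Finset.sum_congr rfl
    intro φ _
    rw [iota1, smul_smul]
  have := irr_indep_fin irr_finite.toFinset (by simp) (fun φ => c φ * φ 1) h2 ψ
    (irr_finite.mem_toFinset.mpr hψ)
  exact (mul_eq_zero.mp this).resolve_right (irr_one_ne hψ)

lemma indep2 : ∀ c : G → ℂ,
    (∑ᶠ g ∈ (Set.univ : Set G), c g • iota2 G g) = 0 → ∀ g ∈ (Set.univ : Set G), c g = 0 := by
  haveI := Fintype.ofFinite G
  intro c hc g _
  rw [fms Set.finite_univ] at hc
  have hval := congrFun hc g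
  rw [Finset.sum_apply, Pi.zero_apply] at hval
  have h2 : ∑ h ∈ Set.finite_univ.toFinset, (if g = h then c h else 0) = c g := by
    rw [Finset.sum_ite_eq, if_pos (Set.finite_univ.mem_toFinset.mpr (Set.mem_univ g))]
  rw [← h2]
  refine Eq.trans ?_ hval
  apply Finset.sum_congr rfl
  intro h _
  show (if g = h then c h else 0) = (c h • iota2 G h) g
  simp only [Pi.smul_apply, smul_eq_mul, iota2]
  by_cases hgh : g = h
  · rw [if_pos hgh, if_pos hgh, mul_one]
  · rw [if_neg hgh, if_neg hgh, mul_zero]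

lemma tot_iota2_apply (K : Set G) (z : G) :
    tot (iota2 G) K z = if z ∈ K then 1 else 0 := by
  show (∑ᶠ g ∈ K, iota2 G g) z = _
  rw [fms K.toFinite, Finset.sum_apply]
  simp only [iota2]
  rw [Finset.sum_ite_eq K.toFinite.toFinset z (fun _ => (1 : ℂ))]
  simp

lemma span2_le_const {Q : Set (Set G)} (hQ : IsPartitionOf Set.univ Q) :
    Submodule.span ℂ (tot (iota2 G) '' Q) ≤ constSub Q := by
  rw [Submodule.span_le]
  rintro _ ⟨K, hK, rfl⟩ q hq x hx y hy
  rw [tot_iota2_apply, tot_iota2_apply]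
  by_cases hxK : x ∈ K
  · rw [if_pos hxK, if_pos (by rwa [hQ.part_eq hq hK hx hxK] at hy)]
  · rw [if_neg hxK, if_neg (fun hyK => hxK (by rwa [hQ.part_eq hq hK hy hyK] at hx))]

lemma const_le_span2 {Q : Set (Set G)} (hQ : IsPartitionOf Set.univ Q) :
    constSub Q ≤ Submodule.span ℂ (tot (iota2 G) '' Q) := by
  intro f hf
  set c : Set G → ℂ := fun K => if h : K.Nonempty then f h.some else 0 with hc
  have key : ∑ᶠ K ∈ Q, c K • tot (iota2 G) K = f := by
    funext z
    have hQf := hQ.finite Set.finite_univ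
    rw [fms hQf, Finset.sum_apply]
    obtain ⟨q, ⟨hq, hzq⟩, -⟩ := hQ.2.2 z (Set.mem_univ z)
    have hterm : ∀ K ∈ hQf.toFinset, (c K • tot (iota2 G) K) z
        = if z ∈ K then c K else 0 := by
      intro K _
      simp only [Pi.smul_apply, smul_eq_mul, tot_iota2_apply]
      split <;> simp
    rw [Finset.sum_congr rfl hterm]
    rw [Finset.sum_eq_single q]
    · rw [if_pos hzq]
      have hne : q.Nonempty := ⟨z, hzq⟩
      have : c q = f hne.some := by rw [hc]; exact dif_pos hne
      rw [this]
      exact hf q hq hne.some hne.some_mem z hzq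
    · intro K hKQ hKq
      rw [if_neg (fun hzK => hKq (hQ.part_eq (hQf.mem_toFinset.mp hKQ) hq hzK hzq))]
    · intro hqQ
      exact absurd (hQf.mem_toFinset.mpr hq) hqQ
  rw [← key]
  exact finsum_mem_span _ (hQ.finite Set.finite_univ) c

end AuxIrr
/-- Proposition 3.3. The coordinatewise partition join of two
supercharacter theories of `G` is again a supercharacter theory of `G`. -/
theorem stmt5 (G : Type) [Group G] [Finite G]
    (𝒳 𝒴 : Set (Set (G → ℂ))) (𝒦 𝓛 : Set (Set G))
    (h1 : IsSCT G 𝒳 𝒦) (h2 : IsSCT G 𝒴 𝓛) :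
    IsSCT G (PartJoin 𝒳 𝒴) (PartJoin 𝒦 𝓛) := by
  obtain ⟨hX, hK, hcard1, hone1, hconst1⟩ := h1
  obtain ⟨hY, hL, hcard2, hone2, hconst2⟩ := h2
  haveI := Fintype.ofFinite G
  have hIrr : (Irr G).Finite := irr_finite
  have hU : (Set.univ : Set G).Finite := Set.finite_univ
  have hJX : IsPartitionOf (Irr G) (PartJoin 𝒳 𝒴) := join_isPartitionOf hX hY
  have hJK : IsPartitionOf Set.univ (PartJoin 𝒦 𝓛) := join_isPartitionOf hK hL
  have hsig : ∀ X ⊆ Irr G, sigmaChar X = tot (iota1 G) X := fun X hXs =>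
    sigma_eq_tot (hIrr.subset hXs)
  have hspanconst : ∀ (P : Set (Set (G → ℂ))) (Q : Set (Set G)), IsPartitionOf (Irr G) P →
      (∀ X ∈ P, ∀ K ∈ Q, ∀ g ∈ K, ∀ h ∈ K, sigmaChar X g = sigmaChar X h) →
      Submodule.span ℂ (tot (iota1 G) '' P) ≤ constSub Q := by
    intro P Q hP hconst
    rw [Submodule.span_le]
    rintro _ ⟨X, hXP, rfl⟩ q hq x hx y hy
    rw [← hsig X (hP.2.1 X hXP)]
    exact hconst X hXP q hq x hx y hy
  have hspaneq : ∀ (P : Set (Set (G → ℂ))) (Q : Set (Set G)), IsPartitionOf (Irr G) P →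
      IsPartitionOf Set.univ Q → P.ncard = Q.ncard →
      (∀ X ∈ P, ∀ K ∈ Q, ∀ g ∈ K, ∀ h ∈ K, sigmaChar X g = sigmaChar X h) →
      Submodule.span ℂ (tot (iota1 G) '' P) = Submodule.span ℂ (tot (iota2 G) '' Q) := by
    intro P Q hP hQ hcard hconst
    have hle : Submodule.span ℂ (tot (iota1 G) '' P) ≤ Submodule.span ℂ (tot (iota2 G) '' Q) :=
      (hspanconst P Q hP hconst).trans (const_le_span2 hQ)
    apply Submodule.eq_of_le_of_finrank_le hle
    rw [finrank_tot_span hP hIrr indep1, finrank_tot_span hQ hU indep2, hcard]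
  have hconstJ : ∀ X ∈ PartJoin 𝒳 𝒴, ∀ K ∈ PartJoin 𝒦 𝓛, ∀ g ∈ K, ∀ h ∈ K,
      sigmaChar X g = sigmaChar X h := by
    intro X hXJ K hKJ g hg h hh
    have hXIrr : X ⊆ Irr G := hJX.2.1 X hXJ
    have hmem1 : tot (iota1 G) X ∈ Submodule.span ℂ (tot (iota1 G) '' 𝒳) :=
      span_le_of_coarser (iota1 G) hX hJX hIrr
        (fun r hr p hp a hap har => subset_join_of_mem hr (Or.inl hp) hap har)
        (Submodule.subset_span ⟨X, hXJ, rfl⟩)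
    have hmem2 : tot (iota1 G) X ∈ Submodule.span ℂ (tot (iota1 G) '' 𝒴) :=
      span_le_of_coarser (iota1 G) hY hJX hIrr
        (fun r hr p hp a hap har => subset_join_of_mem hr (Or.inr hp) hap har)
        (Submodule.subset_span ⟨X, hXJ, rfl⟩)
    have hc1 : tot (iota1 G) X ∈ constSub 𝒦 := hspanconst 𝒳 𝒦 hX hconst1 hmem1
    have hc2 : tot (iota1 G) X ∈ constSub 𝓛 := hspanconst 𝒴 𝓛 hY hconst2 hmem2
    rw [hsig X hXIrr]
    exact const_of_rt (fun p hp x hx y hy => hc1 p hp x hx y hy)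
      (fun q hq x hx y hy => hc2 q hq x hx y hy) (rt_of_mem_join hKJ hg hh)
  have e1 : Module.finrank ℂ (Submodule.span ℂ (tot (iota1 G) '' PartJoin 𝒳 𝒴))
      = (PartJoin 𝒳 𝒴).ncard := finrank_tot_span hJX hIrr indep1
  have e2 : Module.finrank ℂ (Submodule.span ℂ (tot (iota2 G) '' PartJoin 𝒦 𝓛))
      = (PartJoin 𝒦 𝓛).ncard := finrank_tot_span hJK hU indep2
  have dir1 : Submodule.span ℂ (tot (iota1 G) '' PartJoin 𝒳 𝒴)
      ≤ Submodule.span ℂ (tot (iota2 G) '' PartJoin 𝒦 𝓛) :=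
    (hspanconst _ _ hJX hconstJ).trans (const_le_span2 hJK)
  have dir2 : Submodule.span ℂ (tot (iota2 G) '' PartJoin 𝒦 𝓛)
      ≤ Submodule.span ℂ (tot (iota1 G) '' PartJoin 𝒳 𝒴) := by
    have s1 : Submodule.span ℂ (tot (iota2 G) '' PartJoin 𝒦 𝓛)
        ≤ Submodule.span ℂ (tot (iota2 G) '' 𝒦) :=
      span_le_of_coarser (iota2 G) hK hJK hU
        (fun r hr p hp a hap har => subset_join_of_mem hr (Or.inl hp) hap har)
    have s2 : Submodule.span ℂ (tot (iota2 G) '' PartJoin 𝒦 𝓛)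
        ≤ Submodule.span ℂ (tot (iota2 G) '' 𝓛) :=
      span_le_of_coarser (iota2 G) hL hJK hU
        (fun r hr p hp a hap har => subset_join_of_mem hr (Or.inr hp) hap har)
    have s3 := hspaneq 𝒳 𝒦 hX hK hcard1 hconst1
    have s4 := hspaneq 𝒴 𝓛 hY hL hcard2 hconst2
    have s5 : Submodule.span ℂ (tot (iota2 G) '' PartJoin 𝒦 𝓛)
        ≤ Submodule.span ℂ (tot (iota1 G) '' 𝒳) ⊓ Submodule.span ℂ (tot (iota1 G) '' 𝒴) :=
      le_inf (s1.trans_eq s3.symm) (s2.trans_eq s4.symm)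
    exact s5.trans (span_inf_le_join (iota1 G) hX hY hIrr indep1)
  have hncard : (PartJoin 𝒳 𝒴).ncard = (PartJoin 𝒦 𝓛).ncard := by
    rw [← e1, ← e2]
    exact le_antisymm (Submodule.finrank_mono dir1) (Submodule.finrank_mono dir2)
  exact ⟨hJX, hJK, hncard, join_singleton hK hL hone1 hone2, hconstJ⟩
end

section
/- Let G be a finite group and let (𝒳,𝒦) and (𝒴,𝓛) be supercharacter theories of G. Then 𝒳 ≤ 𝒴 in the lattice of partitions of Irr(G) if and only if 𝒦 ≤ 𝓛 in the lattice of partitions of G. -/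
open scoped Classical

namespace SCTAux

open Submodule Module

/-! ### Partition helpers -/

theorem part_nonempty {α : Type*} {S : Set α} {P : Set (Set α)}
    (hp : IsPartitionOf S P) {X : Set α} (hX : X ∈ P) : X.Nonempty := by
  rw [Set.nonempty_iff_ne_empty]
  rintro rfl
  exact hp.1 hX

theorem part_unique {α : Type*} {S : Set α} {P : Set (Set α)}
    (hp : IsPartitionOf S P) {X X' : Set α} (hX : X ∈ P) (hX' : X' ∈ P)
    {a : α} (ha : a ∈ X) (ha' : a ∈ X') : X = X' := by
  obtain ⟨q, -, hu⟩ := hp.2.2 a (hp.2.1 X hX ha)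
  rw [hu X ⟨hX, ha⟩, hu X' ⟨hX', ha'⟩]

theorem part_finite {α : Type*} {S : Set α} {P : Set (Set α)}
    (hp : IsPartitionOf S P) (hS : S.Finite) : P.Finite :=
  hS.finite_subsets.subset fun X hX => hp.2.1 X hX

variable {G : Type} [Group G] [Finite G]

/-! ### Orthogonality of irreducible characters -/

theorem irr_orth [Fintype G] {χ ψ : G → ℂ} (hχ : χ ∈ Irr G) (hψ : ψ ∈ Irr G) :
    ∑ g : G, χ g * ψ g⁻¹ = if χ = ψ then (Fintype.card G : ℂ) else 0 := by
  obtain ⟨V, hV, rfl⟩ := hχ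
  obtain ⟨W, hW, hWc⟩ := hψ
  haveI := hV; haveI := hW
  letI : Fintype G := ‹Fintype G›
  letI i1 : Invertible (Fintype.card G : ℂ) :=
    invertibleOfNonzero (Nat.cast_ne_zero.2 Fintype.card_ne_zero)
  letI : Invertible (Fintype.card G : ℂ) := i1
  by_cases h : FDRep.character V = ψ
  · subst h
    rw [if_pos rfl]
    have h2 : ⅟(Fintype.card G : ℂ) •
        (∑ g : G, FDRep.character V g * FDRep.character V g⁻¹) = 1 := by
      have h0 := FDRep.char_orthonormal (k := ℂ) (G := G) V V
      rw [if_pos ⟨CategoryTheory.Iso.refl V⟩, Nat.card_eq_fintype_card] at h0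
      rw [invOf_eq_inv, smul_eq_mul]
      exact_mod_cast h0
    calc ∑ g : G, FDRep.character V g * FDRep.character V g⁻¹
        = (Fintype.card G : ℂ) * (⅟(Fintype.card G : ℂ) •
          ∑ g : G, FDRep.character V g * FDRep.character V g⁻¹) := by
          rw [smul_eq_mul, ← mul_assoc, mul_invOf_self, one_mul]
      _ = (Fintype.card G : ℂ) := by rw [h2, mul_one]
  · rw [if_neg h]
    have hni : ¬ Nonempty (V ≅ W) := by
      rintro ⟨i⟩
      exact h (by rw [FDRep.char_iso i, hWc])
    have h2 := FDRep.char_orthonormal (k := ℂ) (G := G) V W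
    rw [if_neg hni, hWc, Nat.card_eq_fintype_card] at h2
    simpa using h2

theorem irr_one_ne_zero [Fintype G] {χ : G → ℂ} (hχ : χ ∈ Irr G) : χ 1 ≠ 0 := by
  intro h0
  have horth := irr_orth hχ hχ
  rw [if_pos rfl] at horth
  obtain ⟨V, hV, rfl⟩ := hχ
  have hfr : Module.finrank ℂ V = 0 := by
    have := FDRep.char_one V
    rw [this] at h0
    exact_mod_cast h0
  haveI : Subsingleton V := by
    rwa [Module.finrank_zero_iff] at hfr
  have hzero : ∀ g : G, FDRep.character V g = 0 := by
    intro g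
    have : (V.ρ g) = 0 := Subsingleton.elim _ _
    simp [FDRep.character, this]
  rw [Finset.sum_congr rfl (fun g _ => by rw [hzero g, zero_mul])] at horth
  simp only [Finset.sum_const_zero] at horth
  exact (Nat.cast_ne_zero.2 (Fintype.card_ne_zero (α := G))) horth.symm

/-! ### Pairing of `sigmaChar` against an irreducible character -/

theorem sigma_eq_sum [Fintype G] (hIrr : (Irr G).Finite) {X : Set (G → ℂ)}
    (hX : X ⊆ Irr G) (g : G) :
    sigmaChar X g = ∑ ψ ∈ hIrr.toFinset.filter (· ∈ X), ψ 1 * ψ g := by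
  rw [sigmaChar, finsum_mem_eq_finite_toFinset_sum _ (hIrr.subset hX)]
  apply Finset.sum_congr _ fun _ _ => rfl
  ext ψ
  simp only [Set.Finite.mem_toFinset, Finset.mem_filter]
  exact ⟨fun h => ⟨hX h, h⟩, fun h => h.2⟩

theorem sigma_pair [Fintype G] (hIrr : (Irr G).Finite) {X : Set (G → ℂ)}
    (hX : X ⊆ Irr G) {ψ : G → ℂ} (hψ : ψ ∈ Irr G) :
    ∑ g : G, sigmaChar X g * ψ g⁻¹ =
      if ψ ∈ X then ψ 1 * (Fintype.card G : ℂ) else 0 := by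
  simp_rw [sigma_eq_sum hIrr hX, Finset.sum_mul]
  rw [Finset.sum_comm]
  have hterm : ∀ φ ∈ hIrr.toFinset.filter (· ∈ X),
      ∑ g : G, φ 1 * φ g * ψ g⁻¹ = if φ = ψ then ψ 1 * (Fintype.card G : ℂ) else 0 := by
    intro φ hφ
    have hφIrr : φ ∈ Irr G := hX ((Finset.mem_filter.1 hφ).2)
    simp_rw [mul_assoc, ← Finset.mul_sum]
    rw [irr_orth hφIrr hψ]
    by_cases h : φ = ψ
    · subst h; rw [if_pos rfl, if_pos rfl]
    · rw [if_neg h, if_neg h, mul_zero]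
  rw [Finset.sum_congr rfl hterm,
    Finset.sum_ite_eq' _ ψ (fun _ => ψ 1 * (Fintype.card G : ℂ))]
  congr 1
  simp only [Finset.mem_filter, Set.Finite.mem_toFinset, eq_iff_iff]
  exact ⟨fun h => h.2, fun h => ⟨hψ, h⟩⟩

/-! ### Finiteness of `Irr G` -/

theorem irr_finite : (Irr G).Finite := by
  letI := Fintype.ofFinite G
  rw [← Set.not_infinite]
  intro hinf
  haveI := Set.infinite_coe_iff.2 hinf
  have li : LinearIndependent ℂ (fun χ : Irr G => (χ : G → ℂ)) := by
    rw [linearIndependent_iff']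
    intro t a h i₀ hi₀
    have key := congrArg (fun F : G → ℂ => ∑ g : G, F g * (i₀ : G → ℂ) g⁻¹) h
    simp only [Finset.sum_apply, Pi.smul_apply, smul_eq_mul, Pi.zero_apply, zero_mul,
      Finset.sum_const_zero] at key
    simp_rw [Finset.sum_mul] at key
    rw [Finset.sum_comm] at key
    have hterm : ∀ i ∈ t, (∑ g : G, a i * (i : G → ℂ) g * (i₀ : G → ℂ) g⁻¹) =
        if i = i₀ then a i * (Fintype.card G : ℂ) else 0 := by
      intro i _
      simp_rw [mul_assoc, ← Finset.mul_sum]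
      rw [irr_orth i.2 i₀.2]
      by_cases h' : i = i₀
      · subst h'; rw [if_pos rfl, if_pos rfl]
      · rw [if_neg h', if_neg (fun hc => h' (Subtype.ext hc)), mul_zero]
    rw [Finset.sum_congr rfl hterm, Finset.sum_ite_eq' t i₀
      (fun i => a i * (Fintype.card G : ℂ)), if_pos hi₀] at key
    rcases mul_eq_zero.1 key with h' | h'
    · exact h'
    · exact absurd h' (Nat.cast_ne_zero.2 Fintype.card_ne_zero)
  exact Module.Finite.not_linearIndependent_of_infinite _ li

/-! ### The indicator family -/

/-- The indicator function of a set, valued in `ℂ`. -/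
noncomputable def ind (K : Set G) : G → ℂ := Set.indicator K fun _ => (1 : ℂ)

theorem ind_apply_mem {K : Set G} {g : G} (hg : g ∈ K) : ind K g = 1 := by
  simp [ind, Set.indicator_of_mem hg]

theorem ind_apply_not_mem {K : Set G} {g : G} (hg : g ∉ K) : ind K g = 0 := by
  simp [ind, Set.indicator_of_notMem hg]

/-! ### Linear independence and ranks of the two families -/

theorem sigma_linIndep {𝒳 : Set (Set (G → ℂ))} (hp : IsPartitionOf (Irr G) 𝒳) :
    LinearIndependent ℂ (fun X : 𝒳 => sigmaChar (X : Set (G → ℂ))) := by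
  letI := Fintype.ofFinite G
  have hIrr : (Irr G).Finite := irr_finite
  rw [linearIndependent_iff']
  intro t a h i₀ hi₀
  obtain ⟨χ₀, hχ₀⟩ := part_nonempty hp i₀.2
  have hχIrr : χ₀ ∈ Irr G := hp.2.1 _ i₀.2 hχ₀
  have key := congrArg (fun F : G → ℂ => ∑ g : G, F g * χ₀ g⁻¹) h
  simp only [Finset.sum_apply, Pi.smul_apply, smul_eq_mul, Pi.zero_apply, zero_mul,
    Finset.sum_const_zero] at key
  simp_rw [Finset.sum_mul] at key
  rw [Finset.sum_comm] at key
  have hterm : ∀ i ∈ t, (∑ g : G, a i * sigmaChar (i : Set (G → ℂ)) g * χ₀ g⁻¹) =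
      if i = i₀ then a i * (χ₀ 1 * (Fintype.card G : ℂ)) else 0 := by
    intro i _
    simp_rw [mul_assoc, ← Finset.mul_sum]
    rw [sigma_pair hIrr (hp.2.1 _ i.2) hχIrr]
    by_cases h' : i = i₀
    · subst h'
      rw [if_pos hχ₀, if_pos rfl]
    · have : χ₀ ∉ (i : Set (G → ℂ)) := fun hc =>
        h' (Subtype.ext (part_unique hp i.2 i₀.2 hc hχ₀))
      rw [if_neg this, mul_zero, if_neg h']
  rw [Finset.sum_congr rfl hterm, Finset.sum_ite_eq' t i₀ _, if_pos hi₀] at key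
  rcases mul_eq_zero.1 key with h' | h'
  · exact h'
  · rcases mul_eq_zero.1 h' with h'' | h''
    · exact absurd h'' (irr_one_ne_zero hχIrr)
    · exact absurd h'' (Nat.cast_ne_zero.2 Fintype.card_ne_zero)

theorem ind_linIndep {𝒦 : Set (Set G)} (hp : IsPartitionOf Set.univ 𝒦) :
    LinearIndependent ℂ (fun K : 𝒦 => ind (K : Set G)) := by
  rw [linearIndependent_iff']
  intro t a h i₀ hi₀
  obtain ⟨g₀, hg₀⟩ := part_nonempty hp i₀.2
  have key := congrFun h g₀
  simp only [Finset.sum_apply, Pi.smul_apply, smul_eq_mul, Pi.zero_apply] at key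
  have hterm : ∀ i ∈ t, a i * ind (i : Set G) g₀ = if i = i₀ then a i else 0 := by
    intro i _
    by_cases h' : i = i₀
    · subst h'; rw [if_pos rfl, ind_apply_mem hg₀, mul_one]
    · have : g₀ ∉ (i : Set G) := fun hc =>
        h' (Subtype.ext (part_unique hp i.2 i₀.2 hc hg₀))
      rw [ind_apply_not_mem this, mul_zero, if_neg h']
  rw [Finset.sum_congr rfl hterm, Finset.sum_ite_eq' t i₀ _, if_pos hi₀] at key
  exact key

theorem card_coe_eq_ncard {α : Type*} (s : Set α) [Fintype s] :
    Fintype.card s = s.ncard := by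
  rw [← Nat.card_coe_set_eq, Nat.card_eq_fintype_card]

theorem finrank_span_sigma {𝒳 : Set (Set (G → ℂ))} (hp : IsPartitionOf (Irr G) 𝒳) :
    finrank ℂ (span ℂ (sigmaChar '' 𝒳)) = 𝒳.ncard := by
  have h𝒳 : 𝒳.Finite := part_finite hp irr_finite
  haveI : Fintype 𝒳 := h𝒳.fintype
  rw [Set.image_eq_range, finrank_span_eq_card (sigma_linIndep hp), card_coe_eq_ncard]

theorem finrank_span_ind {𝒦 : Set (Set G)} (hp : IsPartitionOf Set.univ 𝒦) :
    finrank ℂ (span ℂ (ind '' 𝒦)) = 𝒦.ncard := by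
  letI := Fintype.ofFinite G
  have h𝒦 : 𝒦.Finite := part_finite hp Set.finite_univ
  haveI : Fintype 𝒦 := h𝒦.fintype
  rw [Set.image_eq_range, finrank_span_eq_card (ind_linIndep hp), card_coe_eq_ncard]

/-! ### The span of the `sigmaChar`s equals the span of the indicators -/

theorem spans_eq {𝒳 : Set (Set (G → ℂ))} {𝒦 : Set (Set G)} (h : IsSCT G 𝒳 𝒦) :
    span ℂ (sigmaChar '' 𝒳) = span ℂ (ind '' 𝒦) := by
  letI := Fintype.ofFinite G
  obtain ⟨hp𝒳, hp𝒦, hcard, -, hconst⟩ := h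
  have h𝒦fin : 𝒦.Finite := part_finite hp𝒦 Set.finite_univ
  -- the representative of a class
  set rep : Set G → G := fun K => if h : K.Nonempty then h.some else 1 with hrep
  have hle : span ℂ (sigmaChar '' 𝒳) ≤ span ℂ (ind '' 𝒦) := by
    rw [Submodule.span_le]
    rintro f ⟨X, hX, rfl⟩
    have hXrep : sigmaChar X = ∑ K ∈ h𝒦fin.toFinset, sigmaChar X (rep K) • ind K := by
      funext g
      obtain ⟨K₀, ⟨hK₀, hgK₀⟩, -⟩ := hp𝒦.2.2 g (Set.mem_univ g)
      rw [Finset.sum_apply]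
      rw [Finset.sum_eq_single K₀]
      · have hne : K₀.Nonempty := ⟨g, hgK₀⟩
        have hrepK : rep K₀ ∈ K₀ := by
          rw [hrep]; simp only [dif_pos hne]; exact hne.some_mem
        rw [Pi.smul_apply, smul_eq_mul, ind_apply_mem hgK₀, mul_one]
        exact hconst X hX K₀ hK₀ g hgK₀ (rep K₀) hrepK
      · intro K hK hKne
        have : g ∉ K := fun hc =>
          hKne (part_unique hp𝒦 (h𝒦fin.mem_toFinset.1 hK) hK₀ hc hgK₀)
        rw [Pi.smul_apply, smul_eq_mul, ind_apply_not_mem this, mul_zero]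
      · intro hc
        exact absurd (h𝒦fin.mem_toFinset.2 hK₀) hc
    rw [hXrep]
    exact Submodule.sum_mem _ fun K hK => Submodule.smul_mem _ _
      (Submodule.subset_span (Set.mem_image_of_mem _ (h𝒦fin.mem_toFinset.1 hK)))
  haveI : FiniteDimensional ℂ (span ℂ (ind '' 𝒦)) :=
    FiniteDimensional.span_of_finite ℂ (h𝒦fin.image _)
  refine Submodule.eq_of_le_of_finrank_eq hle ?_
  rw [finrank_span_sigma hp𝒳, finrank_span_ind hp𝒦, hcard]

/-! ### Partition order translated to span membership -/

theorem sigmaY_mem_span {𝒳 𝒴 : Set (Set (G → ℂ))}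
    (hp𝒳 : IsPartitionOf (Irr G) 𝒳) (hp𝒴 : IsPartitionOf (Irr G) 𝒴)
    (hle : PartLE 𝒳 𝒴) {Y : Set (G → ℂ)} (hY : Y ∈ 𝒴) :
    sigmaChar Y ∈ span ℂ (sigmaChar '' 𝒳) := by
  letI := Fintype.ofFinite G
  have hIrr : (Irr G).Finite := irr_finite
  have h𝒳fin : 𝒳.Finite := part_finite hp𝒳 hIrr
  have hkey : sigmaChar Y = ∑ X ∈ h𝒳fin.toFinset.filter (· ⊆ Y), sigmaChar X := by
    funext g
    rw [Finset.sum_apply]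
    have hXe : ∀ X ∈ h𝒳fin.toFinset.filter (· ⊆ Y), sigmaChar X g
        = ∑ ψ ∈ hIrr.toFinset.filter (· ∈ X), ψ 1 * ψ g := fun X hXmem =>
      sigma_eq_sum hIrr (hp𝒳.2.1 X (h𝒳fin.mem_toFinset.1 (Finset.mem_filter.1 hXmem).1)) g
    have hdisj : Set.PairwiseDisjoint (↑(h𝒳fin.toFinset.filter (· ⊆ Y)))
        (fun X : Set (G → ℂ) => hIrr.toFinset.filter (· ∈ X)) := by
      intro X hXm X' hX'm hne
      simp only [Finset.coe_filter, Set.mem_setOf_eq] at hXm hX'm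
      simp only [Function.onFun]
      rw [Finset.disjoint_left]
      intro ψ hψ hψ'
      simp only [Finset.mem_filter] at hψ hψ'
      exact hne (part_unique hp𝒳 (h𝒳fin.mem_toFinset.1 hXm.1)
        (h𝒳fin.mem_toFinset.1 hX'm.1) hψ.2 hψ'.2)
    rw [Finset.sum_congr rfl hXe, ← Finset.sum_biUnion hdisj,
      sigma_eq_sum hIrr (hp𝒴.2.1 Y hY) g]
    apply Finset.sum_congr _ fun _ _ => rfl
    ext ψ
    simp only [Finset.mem_filter, Finset.mem_biUnion, Set.Finite.mem_toFinset]
    constructor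
    · rintro ⟨hψIrr, hψY⟩
      obtain ⟨X, ⟨hX𝒳, hψX⟩, -⟩ := hp𝒳.2.2 ψ hψIrr
      obtain ⟨Y', hY', hsubY'⟩ := hle X hX𝒳
      have hYY' : Y' = Y := part_unique hp𝒴 hY' hY (hsubY' hψX) hψY
      exact ⟨X, ⟨hX𝒳, hYY' ▸ hsubY'⟩, hψIrr, hψX⟩
    · rintro ⟨X, ⟨-, hXY⟩, hψIrr, hψX⟩
      exact ⟨hψIrr, hXY hψX⟩
  rw [hkey]
  exact Submodule.sum_mem _ fun X hX => Submodule.subset_span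
    (Set.mem_image_of_mem _ (h𝒳fin.mem_toFinset.1 (Finset.mem_filter.1 hX).1))

theorem indL_mem_span {𝒦 𝓛 : Set (Set G)} (hp𝒦 : IsPartitionOf Set.univ 𝒦)
    (hp𝓛 : IsPartitionOf Set.univ 𝓛) (hle : PartLE 𝒦 𝓛) {L : Set G} (hL : L ∈ 𝓛) :
    ind L ∈ span ℂ (ind '' 𝒦) := by
  letI := Fintype.ofFinite G
  have h𝒦fin : 𝒦.Finite := part_finite hp𝒦 Set.finite_univ
  have hkey : ind L = ∑ K ∈ h𝒦fin.toFinset.filter (· ⊆ L), ind K := by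
    funext g
    rw [Finset.sum_apply]
    obtain ⟨K₀, ⟨hK₀, hgK₀⟩, -⟩ := hp𝒦.2.2 g (Set.mem_univ g)
    by_cases hgL : g ∈ L
    · have hK₀L : K₀ ⊆ L := by
        obtain ⟨L', hL', hsub⟩ := hle K₀ hK₀
        rwa [part_unique hp𝓛 hL' hL (hsub hgK₀) hgL] at hsub
      rw [ind_apply_mem hgL, Finset.sum_eq_single K₀]
      · exact (ind_apply_mem hgK₀).symm
      · intro K hK hKne
        exact ind_apply_not_mem fun hc => hKne (part_unique hp𝒦
          (h𝒦fin.mem_toFinset.1 (Finset.mem_filter.1 hK).1) hK₀ hc hgK₀)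
      · intro hc
        refine absurd ?_ hc
        rw [Finset.mem_filter]
        exact ⟨h𝒦fin.mem_toFinset.2 hK₀, hK₀L⟩
    · rw [ind_apply_not_mem hgL]
      symm
      apply Finset.sum_eq_zero
      intro K hK
      exact ind_apply_not_mem fun hc => hgL ((Finset.mem_filter.1 hK).2 hc)
  rw [hkey]
  exact Submodule.sum_mem _ fun K hK => Submodule.subset_span
    (Set.mem_image_of_mem _ (h𝒦fin.mem_toFinset.1 (Finset.mem_filter.1 hK).1))

/-! ### Span membership back to the partition order -/

theorem partLE_of_ind_span {𝒦 𝓛 : Set (Set G)} (hp𝒦 : IsPartitionOf Set.univ 𝒦)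
    (hp𝓛 : IsPartitionOf Set.univ 𝓛)
    (hsp : ∀ L ∈ 𝓛, ind L ∈ span ℂ (ind '' 𝒦)) : PartLE 𝒦 𝓛 := by
  letI := Fintype.ofFinite G
  have h𝒦fin : 𝒦.Finite := part_finite hp𝒦 Set.finite_univ
  haveI : Fintype 𝒦 := h𝒦fin.fintype
  intro K hK
  obtain ⟨g₀, hg₀⟩ := part_nonempty hp𝒦 hK
  obtain ⟨L, ⟨hL, hg₀L⟩, -⟩ := hp𝓛.2.2 g₀ (Set.mem_univ g₀)
  refine ⟨L, hL, ?_⟩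
  have hmem := hsp L hL
  rw [Set.image_eq_range, mem_span_range_iff_exists_fun] at hmem
  obtain ⟨c, hc⟩ := hmem
  have hcoef : ∀ h₀ : G, h₀ ∈ K → c ⟨K, hK⟩ = ind L h₀ := by
    intro h₀ hh₀
    have key := congrFun hc h₀
    simp only [Finset.sum_apply, Pi.smul_apply, smul_eq_mul] at key
    have hterm : ∀ i ∈ (Finset.univ : Finset 𝒦), c i * ind (i : Set G) h₀
        = if i = ⟨K, hK⟩ then c i else 0 := by
      intro i _
      by_cases h' : i = (⟨K, hK⟩ : 𝒦)
      · subst h'; rw [if_pos rfl, ind_apply_mem hh₀, mul_one]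
      · have : h₀ ∉ (i : Set G) := fun hcm =>
          h' (Subtype.ext (part_unique hp𝒦 i.2 hK hcm hh₀))
        rw [ind_apply_not_mem this, mul_zero, if_neg h']
    rw [Finset.sum_congr rfl hterm, Finset.sum_ite_eq' _ _ _,
      if_pos (Finset.mem_univ _)] at key
    exact key
  intro h₀ hh₀
  have h1 := hcoef g₀ hg₀
  have h2 := hcoef h₀ hh₀
  rw [ind_apply_mem hg₀L] at h1
  by_contra hnot
  rw [ind_apply_not_mem hnot] at h2
  exact one_ne_zero (h1.symm.trans h2)

theorem partLE_of_sigma_span {𝒳 𝒴 : Set (Set (G → ℂ))}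
    (hp𝒳 : IsPartitionOf (Irr G) 𝒳) (hp𝒴 : IsPartitionOf (Irr G) 𝒴)
    (hsp : ∀ Y ∈ 𝒴, sigmaChar Y ∈ span ℂ (sigmaChar '' 𝒳)) : PartLE 𝒳 𝒴 := by
  letI := Fintype.ofFinite G
  have hIrr : (Irr G).Finite := irr_finite
  have h𝒳fin : 𝒳.Finite := part_finite hp𝒳 hIrr
  haveI : Fintype 𝒳 := h𝒳fin.fintype
  intro X hX
  obtain ⟨χ₀, hχ₀⟩ := part_nonempty hp𝒳 hX
  have hχ₀Irr : χ₀ ∈ Irr G := hp𝒳.2.1 X hX hχ₀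
  obtain ⟨Y, ⟨hY, hχ₀Y⟩, -⟩ := hp𝒴.2.2 χ₀ hχ₀Irr
  refine ⟨Y, hY, ?_⟩
  have hmem := hsp Y hY
  rw [Set.image_eq_range, mem_span_range_iff_exists_fun] at hmem
  obtain ⟨c, hc⟩ := hmem
  have hcoef : ∀ ψ, ψ ∈ X → (if ψ ∈ Y then ψ 1 * (Fintype.card G : ℂ) else 0)
      = c ⟨X, hX⟩ * (ψ 1 * (Fintype.card G : ℂ)) := by
    intro ψ hψ
    have hψIrr : ψ ∈ Irr G := hp𝒳.2.1 X hX hψ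
    have key := congrArg (fun F : G → ℂ => ∑ g : G, F g * ψ g⁻¹) hc
    simp only [Finset.sum_apply, Pi.smul_apply, smul_eq_mul] at key
    simp_rw [Finset.sum_mul] at key
    rw [Finset.sum_comm] at key
    have hterm : ∀ i ∈ (Finset.univ : Finset 𝒳),
        (∑ g : G, c i * sigmaChar (i : Set (G → ℂ)) g * ψ g⁻¹)
        = if i = ⟨X, hX⟩ then c i * (ψ 1 * (Fintype.card G : ℂ)) else 0 := by
      intro i _
      simp_rw [mul_assoc, ← Finset.mul_sum]
      rw [sigma_pair hIrr (hp𝒳.2.1 _ i.2) hψIrr]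
      by_cases h' : i = (⟨X, hX⟩ : 𝒳)
      · subst h'; rw [if_pos hψ, if_pos rfl]
      · have : ψ ∉ (i : Set (G → ℂ)) := fun hcm =>
          h' (Subtype.ext (part_unique hp𝒳 i.2 hX hcm hψ))
        rw [if_neg this, mul_zero, if_neg h']
    rw [Finset.sum_congr rfl hterm, Finset.sum_ite_eq' _ _ _,
      if_pos (Finset.mem_univ _), sigma_pair hIrr (hp𝒴.2.1 Y hY) hψIrr] at key
    exact key.symm
  have hne0 : ∀ ψ, ψ ∈ Irr G → ψ 1 * (Fintype.card G : ℂ) ≠ 0 := fun ψ hψ =>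
    mul_ne_zero (irr_one_ne_zero hψ) (Nat.cast_ne_zero.2 Fintype.card_ne_zero)
  have hcX : c ⟨X, hX⟩ = 1 := by
    have h1 := hcoef χ₀ hχ₀
    rw [if_pos hχ₀Y] at h1
    have h2 : (1 : ℂ) * (χ₀ 1 * (Fintype.card G : ℂ))
        = c ⟨X, hX⟩ * (χ₀ 1 * (Fintype.card G : ℂ)) := by rw [one_mul]; exact h1
    exact (mul_right_cancel₀ (hne0 χ₀ hχ₀Irr) h2).symm
  intro ψ hψ
  have h1 := hcoef ψ hψ
  rw [hcX, one_mul] at h1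
  by_contra hnot
  rw [if_neg hnot] at h1
  exact hne0 ψ (hp𝒳.2.1 X hX hψ) h1.symm

end SCTAux

/-- Corollary 3.4. For supercharacter theories `(𝒳,𝒦)` and `(𝒴,𝓛)`
of `G`, `𝒳 ≤ 𝒴` in the partition lattice of `Irr(G)` iff `𝒦 ≤ 𝓛` in the partition
lattice of `G`. -/
theorem stmt6 (G : Type) [Group G] [Finite G]
    (𝒳 𝒴 : Set (Set (G → ℂ))) (𝒦 𝓛 : Set (Set G))
    (h1 : IsSCT G 𝒳 𝒦) (h2 : IsSCT G 𝒴 𝓛) :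
    PartLE 𝒳 𝒴 ↔ PartLE 𝒦 𝓛 := by
  have hS := SCTAux.spans_eq h1
  have hT := SCTAux.spans_eq h2
  constructor
  · intro hle
    apply SCTAux.partLE_of_ind_span h1.2.1 h2.2.1
    intro L hL
    have h1' : SCTAux.ind L ∈ Submodule.span ℂ (SCTAux.ind '' 𝓛) :=
      Submodule.subset_span (Set.mem_image_of_mem _ hL)
    rw [← hT] at h1'
    have hmono : Submodule.span ℂ (sigmaChar '' 𝒴) ≤ Submodule.span ℂ (sigmaChar '' 𝒳) := by
      rw [Submodule.span_le]
      rintro f ⟨Y, hY, rfl⟩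
      exact SCTAux.sigmaY_mem_span h1.1 h2.1 hle hY
    have h2' := hmono h1'
    rwa [hS] at h2'
  · intro hle
    apply SCTAux.partLE_of_sigma_span h1.1 h2.1
    intro Y hY
    have h1' : sigmaChar Y ∈ Submodule.span ℂ (sigmaChar '' 𝒴) :=
      Submodule.subset_span (Set.mem_image_of_mem _ hY)
    rw [hT] at h1'
    have hmono : Submodule.span ℂ (SCTAux.ind '' 𝓛) ≤ Submodule.span ℂ (SCTAux.ind '' 𝒦) := by
      rw [Submodule.span_le]
      rintro f ⟨L, hL, rfl⟩
      exact SCTAux.indL_mem_span h1.2.1 h2.2.1 hle hL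
    have h2' := hmono h1'
    rwa [← hS] at h2'
end

section
/- Let H be a subgroup of a finite group G, and fix a supercharacter theory of G. Let φ be a class function of H and θ a superclass function of G (a complex-valued function on G constant on each superclass). Then [φ^{(G)}, θ] = [φ, θ_H], where [·,·] denotes the usual inner product of complex-valued functions on the respective groups and θ_H is the restriction of θ to H. -/
open scoped Classical

private lemma sclass_spec {G : Type} [Group G] {𝒦 : Set (Set G)}
    (hpart : IsPartitionOf Set.univ 𝒦) (x : G) :
    ∃ K ∈ 𝒦, x ∈ K ∧ sclass 𝒦 x = K := by
  obtain ⟨K, ⟨hK, hxK⟩, huniq⟩ := hpart.2.2 x (Set.mem_univ x)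
  refine ⟨K, hK, hxK, Set.eq_of_subset_of_subset ?_ ?_⟩
  · intro y hy
    obtain ⟨K', ⟨hK'mem, hxK'⟩, hyK'⟩ := hy
    rwa [huniq K' ⟨hK'mem, hxK'⟩] at hyK'
  · intro y hy
    exact ⟨K, ⟨hK, hxK⟩, hy⟩
/-- Frobenius reciprocity for superinduction. For `H ≤ G`, a class
function `φ` of `H`, and a superclass function `θ` of `G`, one has
`[φ^{(G)}, θ] = [φ, θ_H]`. -/
theorem stmt9 (G : Type) [Group G] [Finite G]
    (𝒳 : Set (Set (G → ℂ))) (𝒦 : Set (Set G)) (hSCT : IsSCT G 𝒳 𝒦)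
    (H : Subgroup G) (φ : ↥H → ℂ)
    (hφ : ∀ a b : ↥H, φ (b * a * b⁻¹) = φ a)
    (θ : G → ℂ) (hθ : ∀ K ∈ 𝒦, ∀ x ∈ K, ∀ y ∈ K, θ x = θ y) :
    cInner G (superInd 𝒦 H φ) θ = cInner ↥H φ (fun h => θ ↑h) := by
  classical
  have _instG : Fintype G := Fintype.ofFinite G
  obtain ⟨-, hpart, -, -, -⟩ := hSCT
  -- basic facts about superclasses
  have hmem : ∀ x : G, x ∈ sclass 𝒦 x := by
    intro x
    obtain ⟨K, _, hxK, hS⟩ := sclass_spec hpart x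
    rw [hS]; exact hxK
  have hθc : ∀ x y : G, y ∈ sclass 𝒦 x → θ y = θ x := by
    intro x y hy
    obtain ⟨K, hK, hxK, hS⟩ := sclass_spec hpart x
    rw [hS] at hy
    exact hθ K hK y hy x hxK
  have hSeq : ∀ x y : G, y ∈ sclass 𝒦 x → sclass 𝒦 y = sclass 𝒦 x := by
    intro x y hy
    obtain ⟨K, hK, hxK, hS⟩ := sclass_spec hpart x
    obtain ⟨K', hK', hyK', hS'⟩ := sclass_spec hpart y
    rw [hS] at hy
    obtain ⟨_, _, huniq⟩ := hpart.2.2 y (Set.mem_univ y)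
    rw [hS, hS', huniq K' ⟨hK', hyK'⟩, huniq K ⟨hK, hy⟩]
  have hncard : ∀ x : G, (sclass 𝒦 x).ncard = (sclass 𝒦 x).toFinset.card := by
    intro x; exact Set.ncard_eq_toFinset_card' _
  have hn0 : ∀ x : G, ((sclass 𝒦 x).ncard : ℂ) ≠ 0 := by
    intro x
    have : (sclass 𝒦 x).ncard ≠ 0 := by
      rw [hncard]
      simp only [ne_eq, Finset.card_eq_zero, ← Finset.nonempty_iff_ne_empty]
      exact ⟨x, Set.mem_toFinset.mpr (hmem x)⟩
    exact_mod_cast this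
  set g : G → ℂ := fun y => zeroExtend H φ y * (starRingEnd ℂ) (θ y) with hg
  -- step 1: rewrite the LHS
  have hsum1 : ∀ x : G, superInd 𝒦 H φ x * (starRingEnd ℂ) (θ x)
      = (H.index : ℂ) * (((sclass 𝒦 x).ncard : ℂ))⁻¹ *
        ∑ y ∈ (sclass 𝒦 x).toFinset, g y := by
    intro x
    rw [superInd, mul_assoc]
    congr 1
    rw [finsum_mem_eq_toFinset_sum, Finset.sum_mul]
    refine Finset.sum_congr rfl fun y hy => ?_
    rw [hg]
    simp only []
    rw [hθc x y (Set.mem_toFinset.mp hy)]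
  have hswap : ∑ x : G, (((sclass 𝒦 x).ncard : ℂ))⁻¹ *
      ∑ y ∈ (sclass 𝒦 x).toFinset, g y = ∑ y : G, g y := by
    calc ∑ x : G, (((sclass 𝒦 x).ncard : ℂ))⁻¹ * ∑ y ∈ (sclass 𝒦 x).toFinset, g y
        = ∑ x : G, ∑ y : G, (if y ∈ (sclass 𝒦 x).toFinset then
            (((sclass 𝒦 x).ncard : ℂ))⁻¹ * g y else 0) := by
          refine Finset.sum_congr rfl fun x _ => ?_
          rw [Finset.mul_sum, Finset.sum_ite_mem, Finset.univ_inter]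
      _ = ∑ y : G, ∑ x : G, (if y ∈ (sclass 𝒦 x).toFinset then
            (((sclass 𝒦 x).ncard : ℂ))⁻¹ * g y else 0) := Finset.sum_comm
      _ = ∑ y : G, ∑ x : G, (if x ∈ (sclass 𝒦 y).toFinset then
            (((sclass 𝒦 y).ncard : ℂ))⁻¹ * g y else 0) := by
          refine Finset.sum_congr rfl fun y _ => Finset.sum_congr rfl fun x _ => ?_
          by_cases h : y ∈ sclass 𝒦 x
          · have h1 : sclass 𝒦 y = sclass 𝒦 x := hSeq x y h
            have h2 : x ∈ sclass 𝒦 y := by rw [h1]; exact hmem x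
            rw [if_pos (Set.mem_toFinset.mpr h), if_pos (Set.mem_toFinset.mpr h2), h1]
          · have h2 : x ∉ sclass 𝒦 y := by
              intro hx
              exact h (by rw [hSeq y x hx]; exact hmem y)
            rw [if_neg (fun hc => h (Set.mem_toFinset.mp hc)),
              if_neg (fun hc => h2 (Set.mem_toFinset.mp hc))]
      _ = ∑ y : G, g y := by
          refine Finset.sum_congr rfl fun y _ => ?_
          rw [Finset.sum_ite_mem, Finset.univ_inter, Finset.sum_const, nsmul_eq_mul,
            ← hncard, ← mul_assoc, mul_inv_cancel₀ (hn0 y), one_mul]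
  -- step 2: the sum over G of g equals the sum over H
  have hsum2 : ∑ y : G, g y = ∑ h : ↥H, φ h * (starRingEnd ℂ) (θ ↑h) := by
    have e1 : ∑ y : G, g y = ∑ y ∈ Finset.univ.filter (· ∈ H), g y := by
      rw [Finset.sum_filter]
      refine Finset.sum_congr rfl fun y _ => ?_
      by_cases h : y ∈ H
      · rw [if_pos h]
      · rw [if_neg h, hg]; simp only [zeroExtend, dif_neg h, zero_mul]
    rw [e1, Finset.sum_subtype (Finset.univ.filter (· ∈ H))
      (p := fun x => x ∈ H) (by simp) g]
    refine Finset.sum_congr rfl fun h _ => ?_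
    rw [hg]
    simp only [zeroExtend, dif_pos h.2, Subtype.coe_eta]
  -- cardinality fact
  have hcard : (Nat.card G : ℂ) = (H.index : ℂ) * (Nat.card ↥H : ℂ) := by
    rw [← Nat.cast_mul, mul_comm, Subgroup.card_mul_index]
  have hH0 : (Nat.card ↥H : ℂ) ≠ 0 := by
    exact_mod_cast (Nat.card_pos (α := ↥H)).ne'
  have hi0 : (H.index : ℂ) ≠ 0 := by
    have : H.index ≠ 0 := Subgroup.index_ne_zero_of_finite
    exact_mod_cast this
  simp only [cInner, finsum_eq_sum_of_fintype]
  calc (Nat.card G : ℂ)⁻¹ * ∑ x : G, superInd 𝒦 H φ x * (starRingEnd ℂ) (θ x)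
      = (Nat.card G : ℂ)⁻¹ * ((H.index : ℂ) *
          ∑ x : G, (((sclass 𝒦 x).ncard : ℂ))⁻¹ * ∑ y ∈ (sclass 𝒦 x).toFinset, g y) := by
        congr 1
        rw [Finset.mul_sum]
        refine Finset.sum_congr rfl fun x _ => ?_
        rw [hsum1 x, mul_assoc]
    _ = (Nat.card ↥H : ℂ)⁻¹ * ∑ h : ↥H, φ h * (starRingEnd ℂ) (θ ↑h) := by
        rw [hswap, hsum2, ← mul_assoc, hcard]
        field_simp
end
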